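/- arXiv:1108.3197 — 9 statements merged into one kernel-verified Lean document; each statement's English description precedes it below -/
import Mathlib

section
/- For any positive integer n, the double sum over 1 ≤ k ≤ i ≤ n of (2^k - 1)/(k·i) equals the sum over j from 1 to n of (1/j²)·C(n, j). -/
lemma sum_choose_Icc (m : ℕ) :
    ∑ j ∈ Finset.Icc 1 (m+1), ((m+1).choose j : ℚ) = 2 ^ (m+1) - 1 := by
  have h0 : Finset.range (m+2) = insert 0 (Finset.Icc 1 (m+1)) := by
    ext x; simp; omega
  have h1 : ∑ j ∈ Finset.range (m+2), ((m+1).choose j : ℚ) = 2 ^ (m+1) := by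
    exact_mod_cast Nat.sum_range_choose (m+1)
  rw [h0, Finset.sum_insert (by simp)] at h1
  simp at h1
  linarith

lemma lemB (m : ℕ) :
    ∑ j ∈ Finset.Icc 1 (m+1), (m.choose (j-1) : ℚ) / j
      = (2 ^ (m+1) - 1) / (m+1) := by
  have key : ∀ j ∈ Finset.Icc 1 (m+1), (m.choose (j-1) : ℚ) / j
      = ((m+1).choose j : ℚ) / (m+1) := by
    intro j hj
    simp only [Finset.mem_Icc] at hj
    obtain ⟨h1, h2⟩ := hj
    obtain ⟨k, rfl⟩ : ∃ k, j = k + 1 := ⟨j - 1, by omega⟩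
    have hnat : (m+1) * m.choose k = (m+1).choose (k+1) * (k+1) :=
      Nat.add_one_mul_choose_eq m k
    have hq : ((m:ℚ)+1) * (m.choose k : ℚ) = ((m+1).choose (k+1) : ℚ) * ((k:ℚ)+1) := by
      exact_mod_cast hnat
    have hk : ((k:ℚ)+1) ≠ 0 := by positivity
    have hm : ((m:ℚ)+1) ≠ 0 := by positivity
    rw [Nat.add_sub_cancel]
    push_cast
    field_simp
    linarith [hq]
  rw [Finset.sum_congr rfl key, ← Finset.sum_div, sum_choose_Icc]

lemma lemA (m : ℕ) :
    ∑ k ∈ Finset.Icc 1 m, ((2:ℚ)^k - 1) / k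
      = ∑ j ∈ Finset.Icc 1 m, (m.choose j : ℚ) / j := by
  induction m with
  | zero => simp
  | succ m ih =>
    rw [Finset.sum_Icc_succ_top (by omega : 1 ≤ m+1), ih]
    have split : ∀ j ∈ Finset.Icc 1 (m+1), ((m+1).choose j : ℚ) / j
        = (m.choose j : ℚ) / j + (m.choose (j-1) : ℚ) / j := by
      intro j hj
      simp only [Finset.mem_Icc] at hj
      obtain ⟨h1, h2⟩ := hj
      have : (m+1).choose j = m.choose j + m.choose (j-1) := by
        obtain ⟨k, rfl⟩ : ∃ k, j = k + 1 := ⟨j - 1, by omega⟩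
        simp [Nat.choose_succ_succ]
        omega
      rw [this]
      push_cast
      ring
    rw [Finset.sum_congr rfl split, Finset.sum_add_distrib, lemB]
    rw [Finset.sum_Icc_succ_top (by omega : 1 ≤ m+1)]
    simp only [Nat.choose_succ_self, Nat.cast_zero]
    push_cast
    ring

theorem stmt0 (n : ℕ) (hn : 0 < n) :
    ∑ i ∈ Finset.Icc 1 n, ∑ k ∈ Finset.Icc 1 i, ((2 : ℚ) ^ k - 1) / ((k : ℚ) * i)
      = ∑ j ∈ Finset.Icc 1 n, (1 : ℚ) / (j : ℚ) ^ 2 * (n.choose j) := by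
  clear hn
  induction n with
  | zero => simp
  | succ n ih =>
    rw [Finset.sum_Icc_succ_top (by omega : 1 ≤ n+1), ih]
    have hinner : ∑ k ∈ Finset.Icc 1 (n+1), ((2:ℚ)^k - 1) / ((k:ℚ) * ((n+1:ℕ):ℚ))
        = (∑ k ∈ Finset.Icc 1 (n+1), ((2:ℚ)^k - 1) / k) / (n+1) := by
      rw [Finset.sum_div]
      refine Finset.sum_congr rfl fun k hk => ?_
      push_cast
      rw [div_div]
    rw [hinner, lemA]
    have split : ∀ j ∈ Finset.Icc 1 (n+1), (1:ℚ) / (j:ℚ)^2 * ((n+1).choose j)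
        = (1:ℚ) / (j:ℚ)^2 * (n.choose j) + (n.choose (j-1) : ℚ) / (j:ℚ)^2 := by
      intro j hj
      simp only [Finset.mem_Icc] at hj
      obtain ⟨h1, h2⟩ := hj
      have : (n+1).choose j = n.choose j + n.choose (j-1) := by
        obtain ⟨k, rfl⟩ : ∃ k, j = k + 1 := ⟨j - 1, by omega⟩
        simp [Nat.choose_succ_succ]
        omega
      rw [this]
      push_cast
      ring
    rw [Finset.sum_congr rfl split, Finset.sum_add_distrib]
    have key : ∑ j ∈ Finset.Icc 1 (n+1), (n.choose (j-1) : ℚ) / (j:ℚ)^2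
        = (∑ j ∈ Finset.Icc 1 (n+1), ((n+1).choose j : ℚ) / j) / (n+1) := by
      rw [Finset.sum_div]
      refine Finset.sum_congr rfl fun j hj => ?_
      simp only [Finset.mem_Icc] at hj
      obtain ⟨h1, h2⟩ := hj
      obtain ⟨k, rfl⟩ : ∃ k, j = k + 1 := ⟨j - 1, by omega⟩
      have hnat : (n+1) * n.choose k = (n+1).choose (k+1) * (k+1) :=
        Nat.add_one_mul_choose_eq n k
      have hq : ((n:ℚ)+1) * (n.choose k : ℚ) = ((n+1).choose (k+1) : ℚ) * ((k:ℚ)+1) := by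
        exact_mod_cast hnat
      have hk : ((k:ℚ)+1) ≠ 0 := by positivity
      have hm : ((n:ℚ)+1) ≠ 0 := by positivity
      rw [Nat.add_sub_cancel]
      push_cast
      field_simp
      linear_combination hq
    rw [key]
    rw [Finset.sum_Icc_succ_top (by omega : 1 ≤ n+1),
        Finset.sum_Icc_succ_top (by omega : 1 ≤ n+1)]
    simp only [Nat.choose_succ_self, Nat.cast_zero]
    push_cast
    ring
end

section
/- For any odd positive integer n, the sum over k from 1 to n-1 of ((-2)^k / k)·C(n, k) equals -2·H_{n-1} + H_{(n-1)/2} + (2^n - 2)/n, where H_m = ∑_{j=1}^m 1/j is the m-th harmonic number. -/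
noncomputable def H (n : ℕ) : ℚ := ∑ i ∈ Finset.Icc 1 n, (1 : ℚ) / i

lemma Hsucc (n : ℕ) : H (n+1) = H n + 1/(n+1) := by
  rw [H, H, Finset.sum_Icc_succ_top (by omega : 1 ≤ n+1)]
  push_cast; ring

lemma IccRange (g : ℕ → ℚ) (m : ℕ) :
    ∑ k ∈ Finset.Icc 1 m, g k = ∑ i ∈ Finset.range m, g (1+i) := by
  rw [← Finset.Ico_add_one_right_eq_Icc, Finset.sum_Ico_eq_sum_range]
  simp

noncomputable def f (n : ℕ) : ℚ := ∑ k ∈ Finset.Icc 1 n, ((-2 : ℚ) ^ k / k) * (n.choose k)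

lemma binom (n : ℕ) : ((-1:ℚ))^n = ∑ i ∈ Finset.range (n+1), (-2:ℚ)^i * (n.choose i) := by
  have := add_pow (-2 : ℚ) 1 n
  simp at this
  rw [show (-1:ℚ) = -2 + 1 by ring, this]

lemma frec (n : ℕ) : f (n+1) = f n + (((-1:ℚ)^(n+1) - 1)/(n+1)) := by
  have hn1 : ((n:ℚ)+1) ≠ 0 := by positivity
  have hcast : ∀ j : ℕ, ((-2:ℚ)^(j+1)/(j+1)) * (n.choose j) = (-2)^(j+1) * (((n+1).choose (j+1)) : ℚ) / (n+1) := by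
    intro j
    have h := Nat.add_one_mul_choose_eq n j
    have h2 : ((n+1 : ℕ) : ℚ) * n.choose j = ((n+1).choose (j+1) : ℚ) * (j+1) := by
      exact_mod_cast congrArg (Nat.cast : ℕ → ℚ) h
    have hj : (j:ℚ)+1 ≠ 0 := by positivity
    field_simp
    push_cast at h2 ⊢
    linear_combination h2
  rw [f, IccRange]
  have step : ∀ i ∈ Finset.range (n+1),
      (-2:ℚ)^(1+i)/(↑(1+i)) * ((n+1).choose (1+i))
        = (-2:ℚ)^(i+1)/(↑(i+1)) * (n.choose (i+1)) + (-2)^(i+1) * (((n+1).choose (i+1)) : ℚ)/(n+1) := by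
    intro i _
    have hc : (((n+1).choose (i+1)) : ℚ) = n.choose i + n.choose (i+1) := by
      exact_mod_cast Nat.choose_succ_succ n i
    rw [add_comm 1 i, ← hcast i, hc]
    push_cast
    ring
  rw [Finset.sum_congr rfl step, Finset.sum_add_distrib]
  congr 1
  · rw [Finset.sum_range_succ, Nat.choose_succ_self]
    simp
    rw [f, IccRange]
    exact Finset.sum_congr rfl (fun i _ => by rw [add_comm 1 i]; push_cast; ring)
  · rw [← Finset.sum_div]
    congr 1
    have hb := binom (n+1)
    rw [Finset.sum_range_succ'] at hb
    simp at hb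
    push_cast
    linarith

lemma fval (n : ℕ) : f n = ∑ m ∈ Finset.Icc 1 n, ((-1:ℚ)^m - 1)/m := by
  induction n with
  | zero => simp [f]
  | succ k ih =>
    rw [frec, ih, Finset.sum_Icc_succ_top (by omega : 1 ≤ k+1)]
    push_cast; ring

lemma oddsum (m : ℕ) : ∑ j ∈ Finset.Icc 1 (2*m+1), ((-1:ℚ)^j - 1)/j = -2 * H (2*m+1) + H m := by
  induction m with
  | zero =>
    rw [show 2*0+1 = 1 from rfl]
    norm_num [H]
  | succ k ih =>
    have hs : ∑ j ∈ Finset.Icc 1 (2*k+3), ((-1:ℚ)^j - 1)/j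
        = (∑ j ∈ Finset.Icc 1 (2*k+1), ((-1:ℚ)^j - 1)/j)
          + ((-1:ℚ)^(2*k+2) - 1)/(↑(2*k+2)) + ((-1:ℚ)^(2*k+3) - 1)/(↑(2*k+3)) := by
      rw [show 2*k+3 = (2*k+2)+1 from rfl, Finset.sum_Icc_succ_top (by omega),
          show 2*k+2 = (2*k+1)+1 from rfl, Finset.sum_Icc_succ_top (by omega)]
    have e1 : ((-1:ℚ))^(2*k+2) = 1 := by
      have : Even (2*k+2) := by exact ⟨k+1, by ring⟩
      exact this.neg_one_pow
    have e2 : ((-1:ℚ))^(2*k+3) = -1 := by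
      have : Odd (2*k+3) := by exact ⟨k+1, by ring⟩
      exact this.neg_one_pow
    have hH3 : H (2*k+3) = H (2*k+1) + 1/(2*(k:ℚ)+2) + 1/(2*(k:ℚ)+3) := by
      rw [show 2*k+3 = (2*k+2)+1 from rfl, Hsucc, show 2*k+2 = (2*k+1)+1 from rfl, Hsucc]
      push_cast; ring
    rw [show 2*(k+1)+1 = 2*k+3 by ring, hs, ih, e1, e2, hH3, Hsucc k]
    have hk1 : ((k:ℚ)+1) ≠ 0 := by positivity
    have hk2 : (2*(k:ℚ)+2) ≠ 0 := by positivity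
    have hk3 : (2*(k:ℚ)+3) ≠ 0 := by positivity
    push_cast
    field_simp
    ring

theorem stmt1 (n : ℕ) (hn : 0 < n) (hodd : Odd n) :
    ∑ k ∈ Finset.Icc 1 (n - 1), ((-2 : ℚ) ^ k / k) * (n.choose k)
      = -2 * H (n - 1) + H ((n - 1) / 2) + ((2 : ℚ) ^ n - 2) / n := by
  obtain ⟨m, rfl⟩ := hodd
  have h1 : 2*m+1-1 = 2*m := by omega
  have h2 : (2*m)/2 = m := by omega
  rw [h1, h2]
  have hf : f (2*m+1) = -2 * H (2*m+1) + H m := by rw [fval, oddsum]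
  have hsplit : f (2*m+1) = (∑ k ∈ Finset.Icc 1 (2*m), ((-2 : ℚ) ^ k / k) * ((2*m+1).choose k))
      + ((-2:ℚ))^(2*m+1)/(↑(2*m+1)) * ((2*m+1).choose (2*m+1)) := by
    rw [f, show 2*m+1 = (2*m)+1 from rfl, Finset.sum_Icc_succ_top (by omega : 1 ≤ 2*m+1)]
  rw [Nat.choose_self] at hsplit
  have hHn : H (2*m+1) = H (2*m) + 1/(2*(m:ℚ)+1) := by
    rw [show 2*m+1 = (2*m)+1 from rfl, Hsucc]; push_cast; ring
  have hpow : ((-2:ℚ))^(2*m+1) = -(2:ℚ)^(2*m+1) := by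
    have h : Odd (2*m+1) := ⟨m, by ring⟩
    exact h.neg_pow (2:ℚ)
  have hm : (2*(m:ℚ)+1) ≠ 0 := by positivity
  have key := hsplit
  rw [hf, hHn, hpow] at key
  push_cast at key ⊢
  field_simp at key ⊢
  linarith
end

section
/- For any even positive integer n, the sum over k from 1 to n-1 of ((-2)^k / k)·C(n, k) equals -2·H_n + H_{n/2} - 2^n/n. -/
lemma bin_sum (m : ℕ) :
    ∑ k ∈ Finset.range (m + 1), (-2 : ℚ) ^ k * (m.choose k) = (-1) ^ m := by
  have h := add_pow (-2 : ℚ) 1 m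
  norm_num at h
  linear_combination -h

lemma termwise (n j : ℕ) :
        (-2 : ℚ) ^ (j + 1) / (↑(j + 1)) * ((n + 1).choose (j + 1))
          = (1 / ((n : ℚ) + 1)) * ((-2 : ℚ) ^ (j + 1) * ((n + 1).choose (j + 1)))
            + (-2 : ℚ) ^ (j + 1) / (↑(j + 1)) * (n.choose (j + 1)) := by
  have hq : ((n : ℚ) + 1) * (n.choose j) = ((n + 1).choose (j + 1)) * ((j : ℚ) + 1) := by
    exact_mod_cast Nat.add_one_mul_choose_eq n j
  have hchoose : ((n + 1).choose (j + 1) : ℚ) = (n.choose j) + (n.choose (j + 1)) := by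
    rw [Nat.choose_succ_succ]; push_cast; ring
  have hj : ((j : ℚ) + 1) ≠ 0 := by positivity
  have hn1 : ((n : ℚ) + 1) ≠ 0 := by positivity
  push_cast
  generalize (n.choose j : ℚ) = a at hq hchoose
  generalize (n.choose (j + 1) : ℚ) = b at hchoose ⊢
  generalize ((n + 1).choose (j + 1) : ℚ) = c at hq hchoose ⊢
  field_simp
  linear_combination hq + ((n:ℚ)+1) * hchoose

lemma key (n : ℕ) :
    ∑ k ∈ Finset.range (n + 1), (-2 : ℚ) ^ k / k * (n.choose k)
      = -2 * ∑ j ∈ Finset.Icc 1 n, (if Odd j then (1 : ℚ) / j else 0) := by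
  induction n with
  | zero => simp
  | succ n ih =>
    rw [Finset.sum_range_succ' _ (n + 1)]
    rw [Finset.sum_congr rfl (fun j _ => termwise n j), Finset.sum_add_distrib,
      ← Finset.mul_sum]
    have hb : ∑ j ∈ Finset.range (n + 1), (-2 : ℚ) ^ (j + 1) * ((n + 1).choose (j + 1))
        = (-1) ^ (n + 1) - 1 := by
      have h := bin_sum (n + 1)
      rw [Finset.sum_range_succ' _ (n + 1)] at h
      simp at h
      linarith
    rw [hb]
    have h2 : ∑ j ∈ Finset.range (n + 1), (-2 : ℚ) ^ (j + 1) / (↑(j + 1)) * (n.choose (j + 1))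
        = ∑ k ∈ Finset.range (n + 1), (-2 : ℚ) ^ k / k * (n.choose k) := by
      rw [Finset.sum_range_succ' (fun k => (-2 : ℚ) ^ k / k * (n.choose k)) n,
        Finset.sum_range_succ]
      simp
    rw [h2, ih]
    rw [Finset.sum_Icc_succ_top (Nat.le_add_left 1 n)]
    rcases Nat.even_or_odd (n + 1) with he | ho
    · rw [he.neg_one_pow]
      simp [Nat.not_odd_iff_even.mpr he]
    · rw [ho.neg_one_pow]
      have : ((n : ℚ) + 1) ≠ 0 := by positivity
      simp only [ho, if_true]
      push_cast
      field_simp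
      ring

lemma odd_sum (m : ℕ) :
    ∑ j ∈ Finset.Icc 1 (2 * m), (if Odd j then (1 : ℚ) / j else 0)
      = H (2 * m) - (1 / 2) * H m := by
  induction m with
  | zero => simp [H]
  | succ m ih =>
    have h2 : 2 * (m + 1) = (2 * m + 1) + 1 := by ring
    rw [h2, Finset.sum_Icc_succ_top (by omega), Finset.sum_Icc_succ_top (by omega), ih]
    have hH1 : H ((2 * m + 1) + 1) = H (2 * m) + 1 / ((2 * m : ℚ) + 1) + 1 / ((2 * m : ℚ) + 2) := by
      unfold H
      rw [Finset.sum_Icc_succ_top (by omega), Finset.sum_Icc_succ_top (by omega)]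
      push_cast; ring
    have hH2 : H (m + 1) = H m + 1 / ((m : ℚ) + 1) := by
      unfold H
      rw [Finset.sum_Icc_succ_top (by omega)]
      push_cast; ring
    rw [hH1, hH2]
    have ho : Odd (2 * m + 1) := ⟨m, by ring⟩
    have hmo : ¬ Odd (2 * m + 1 + 1) := by simp [Nat.odd_iff]; omega
    rw [if_pos ho, if_neg hmo]
    have h1 : ((2 * m : ℚ) + 1) ≠ 0 := by positivity
    have h3 : ((m : ℚ) + 1) ≠ 0 := by positivity
    push_cast
    field_simp
    ring

theorem stmt2 (n : ℕ) (hn : 0 < n) (heven : Even n) :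
    ∑ k ∈ Finset.Icc 1 (n - 1), ((-2 : ℚ) ^ k / k) * (n.choose k)
      = -2 * H n + H (n / 2) - (2 : ℚ) ^ n / n := by
  obtain ⟨m, hm⟩ := heven
  have hnm : n = 2 * m := by omega
  have hm1 : 1 ≤ m := by omega
  have hdiv : n / 2 = m := by omega
  have hrange : Finset.range (n + 1) = insert 0 (Finset.Icc 1 n) := by
    ext x; simp [Nat.lt_succ_iff]; omega
  have hk := key n
  rw [hrange, Finset.sum_insert (by simp)] at hk
  have h0 : (-2 : ℚ) ^ 0 / ((0 : ℕ) : ℚ) * (n.choose 0) = 0 := by norm_num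
  rw [h0, zero_add] at hk
  have hO : ∑ j ∈ Finset.Icc 1 n, (if Odd j then (1 : ℚ) / j else 0)
      = H n - (1 / 2) * H m := by
    rw [hnm]; exact odd_sum m
  rw [hO] at hk
  have hsplit : ∑ k ∈ Finset.Icc 1 n, (-2 : ℚ) ^ k / k * (n.choose k)
      = (∑ k ∈ Finset.Icc 1 (n - 1), (-2 : ℚ) ^ k / k * (n.choose k))
        + (-2 : ℚ) ^ n / n * (n.choose n) := by
    conv_lhs => rw [show n = (n - 1) + 1 from by omega]
    rw [Finset.sum_Icc_succ_top (by omega)]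
    rw [show n - 1 + 1 = n from by omega]
  rw [hsplit] at hk
  have hneg : ((-2 : ℚ)) ^ n = 2 ^ n := by
    have hev : Even n := ⟨m, hm⟩
    exact hev.neg_pow 2
  rw [Nat.choose_self, hneg] at hk
  rw [hdiv]
  push_cast at hk ⊢
  linarith
end

section
/- For any positive integer n and any real (or rational) x, the sum over k from 1 to n of ((-x)^k / k)·C(n, k) equals the sum over k from 1 to n of ((1-x)^k - 1)/k. -/
open Finset in
lemma aux3 (n : ℕ) (x : ℚ) :
    ∑ k ∈ Finset.Icc 1 (n+1), ((-x) ^ k / k) * (n.choose (k-1))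
      = ((1 - x) ^ (n+1) - 1) / (n+1) := by
  rw [← Finset.Ico_add_one_right_eq_Icc, Finset.sum_Ico_eq_sum_range]
  simp only [Nat.add_sub_cancel]
  have hbin : (1 - x) ^ (n+1) = ∑ k ∈ range (n+2), (-x)^k * (n+1).choose k := by
    have := add_pow (-x) 1 (n+1)
    simp only [one_pow, mul_one] at this
    rw [show (1:ℚ) - x = -x + 1 by ring, this]
  have key : ∀ j ∈ range (n+1),
      (-x) ^ (1+j) / ((1+j : ℕ) : ℚ) * (n.choose (1+j-1))
        = (-x)^(j+1) * (n+1).choose (j+1) / (n+1) := by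
    intro j _
    have h : ((n:ℚ)+1) * n.choose j = (n+1).choose (j+1) * (j+1) := by
      exact_mod_cast congrArg (Nat.cast (R := ℚ)) (Nat.add_one_mul_choose_eq n j)
    have hj : ((j:ℚ)+1) ≠ 0 := by positivity
    have hn1 : ((n:ℚ)+1) ≠ 0 := by positivity
    simp only [Nat.add_sub_cancel_left, add_comm 1 j]
    push_cast
    field_simp
    ring_nf
    ring_nf at h
    linear_combination (-x)^(j+1) * h
  rw [Finset.sum_congr rfl key, ← Finset.sum_div, hbin]
  congr 1
  conv_rhs => rw [Finset.sum_range_succ']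
  simp

theorem stmt3 (n : ℕ) (hn : 0 < n) (x : ℚ) :
    ∑ k ∈ Finset.Icc 1 n, ((-x) ^ k / k) * (n.choose k)
      = ∑ k ∈ Finset.Icc 1 n, ((1 - x) ^ k - 1) / k := by
  induction n with
  | zero => omega
  | succ n ih =>
    rcases Nat.eq_zero_or_pos n with rfl | hpos
    · simp only [Finset.Icc_self, Finset.sum_singleton, Nat.choose_one_right,
        Nat.cast_one, pow_one]
      ring
    · have pascal : ∀ k ∈ Finset.Icc 1 (n+1),
          ((-x) ^ k / k) * ((n+1).choose k)
            = ((-x) ^ k / k) * (n.choose k) + ((-x) ^ k / k) * (n.choose (k-1)) := by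
        intro k hk
        simp only [Finset.mem_Icc] at hk
        obtain ⟨h1, _⟩ := hk
        obtain ⟨m, rfl⟩ := Nat.exists_eq_add_of_le' h1
        rw [Nat.choose_succ_succ, Nat.add_sub_cancel]
        push_cast
        ring
      rw [Finset.sum_congr rfl pascal, Finset.sum_add_distrib, aux3,
        Finset.sum_Icc_succ_top (by omega : 1 ≤ n+1),
        Finset.sum_Icc_succ_top (by omega : 1 ≤ n+1), Nat.choose_succ_self]
      push_cast
      rw [ih hpos]
      ring
end

section
/- For any odd positive integer n, the sum over k from 1 to n-1 of ((-2)^{k-1} / k)·C(n, k-1) equals 2^{n-1}(1-n)/(n+1). -/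
theorem stmt4 (n : ℕ) (hn : 0 < n) (hodd : Odd n) :
    ∑ k ∈ Finset.Icc 1 (n - 1), ((-2 : ℚ) ^ (k - 1) / k) * (n.choose (k - 1))
      = (2 : ℚ) ^ (n - 1) * (1 - n) / (n + 1) := by
  obtain ⟨m, rfl⟩ := hodd
  have h1 : 2 * m + 1 - 1 = 2 * m := rfl
  rw [h1, ← Finset.Ico_add_one_right_eq_Icc, Finset.sum_Ico_eq_sum_range]
  have h2 : 2 * m + 1 - 1 = 2 * m := rfl
  rw [h2]
  have key : ∀ i ∈ Finset.range (2 * m),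
      ((-2 : ℚ) ^ (1 + i - 1) / (↑(1 + i))) * ((2 * m + 1).choose (1 + i - 1)) =
      ((-2 : ℚ) ^ (i + 1) * ((2 * m + 2).choose (i + 1))) / (-2 * (2 * m + 2)) := by
    intro i _
    have hnat : (2 * m + 1 + 1) * (2 * m + 1).choose i = (2 * m + 2).choose (i + 1) * (i + 1) := by
      have := Nat.add_one_mul_choose_eq (2 * m + 1) i
      simpa using this
    have hq : ((2 : ℚ) * m + 2) * ((2 * m + 1).choose i) =
        ((2 * m + 2).choose (i + 1)) * (i + 1) := by
      exact_mod_cast hnat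
    have hi : (1 : ℕ) + i - 1 = i := by omega
    have hd : ((2:ℚ) * m + 2) ≠ 0 := by positivity
    have hq' : (((2 * m + 1).choose i : ℚ)) =
        ((2 * m + 2).choose (i + 1)) * (i + 1) / (2 * m + 2) := by
      rw [eq_div_iff hd]; linarith [hq]
    have h1i : ((1 + i : ℕ) : ℚ) = (i : ℚ) + 1 := by push_cast; ring
    have hi1 : ((i : ℚ) + 1) ≠ 0 := by positivity
    rw [hi, hq', h1i]
    field_simp
    ring
  rw [Finset.sum_congr rfl key, ← Finset.sum_div]
  have hbin : ∑ j ∈ Finset.range (2 * m + 3), (-2 : ℚ) ^ j * ((2 * m + 2).choose j) = 1 := by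
    have := add_pow (-2 : ℚ) 1 (2 * m + 2)
    simp only [one_pow, mul_one] at this
    rw [← this]
    rw [show 2*m+2 = 2*(m+1) by ring]
    rw [show (-2:ℚ)+1 = -1 by norm_num, pow_mul]
    norm_num
  have hsplit : ∑ j ∈ Finset.range (2 * m + 3), (-2 : ℚ) ^ j * ((2 * m + 2).choose j) =
      (∑ i ∈ Finset.range (2 * m), (-2 : ℚ) ^ (i + 1) * ((2 * m + 2).choose (i + 1)))
      + 1 + (-2 : ℚ) ^ (2 * m + 1) * ((2 * m + 2).choose (2 * m + 1))
      + (-2 : ℚ) ^ (2 * m + 2) * ((2 * m + 2).choose (2 * m + 2)) := by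
    rw [Finset.sum_range_succ, Finset.sum_range_succ, Finset.sum_range_succ']
    simp only [Nat.choose_zero_right, Nat.cast_one]
    push_cast
    ring
  have hT : ∑ i ∈ Finset.range (2 * m), (-2 : ℚ) ^ (i + 1) * ((2 * m + 2).choose (i + 1)) =
      - (-2 : ℚ) ^ (2 * m + 1) * ((2 * m + 2).choose (2 * m + 1))
      - (-2 : ℚ) ^ (2 * m + 2) * ((2 * m + 2).choose (2 * m + 2)) := by
    have := hsplit.symm.trans hbin
    linarith
  rw [hT]
  have hc1 : (2 * m + 2).choose (2 * m + 1) = 2 * m + 2 := by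
    exact Nat.choose_succ_self_right (2 * m + 1)
  have hc2 : (2 * m + 2).choose (2 * m + 2) = 1 := Nat.choose_self _
  rw [hc1, hc2]
  have hpow : (-2 : ℚ) ^ (2 * m + 1) = -(2 : ℚ) ^ (2 * m + 1) :=
    Odd.neg_pow ⟨m, by ring⟩ 2
  have hpow2 : (-2 : ℚ) ^ (2 * m + 2) = (2 : ℚ) ^ (2 * m + 2) :=
    Even.neg_pow ⟨m + 1, by ring⟩ 2
  rw [hpow, hpow2]
  have hne : ((2 : ℚ) * m + 2) ≠ 0 := by positivity
  push_cast
  field_simp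
  ring
end

section
/- For any even positive integer n, the sum over k from 1 to n-1 of ((-2)^{k-1} / k)·C(n, k-1) equals ((n-1)·2^{n-1} + 1)/(n+1). -/
theorem stmt5 (n : ℕ) (hn : 0 < n) (heven : Even n) :
    ∑ k ∈ Finset.Icc 1 (n - 1), ((-2 : ℚ) ^ (k - 1) / k) * (n.choose (k - 1))
      = (((n : ℚ) - 1) * 2 ^ (n - 1) + 1) / (n + 1) := by
  obtain ⟨m, rfl⟩ : ∃ m, n = m + 2 := ⟨n - 2, by rcases heven with ⟨t, ht⟩; omega⟩
  have hEm : Even m := by rcases heven with ⟨t, ht⟩; exact ⟨t - 1, by omega⟩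
  -- key sum T
  set T : ℚ := ∑ i ∈ Finset.range (m + 1), (-2 : ℚ) ^ i * ((m + 3).choose (i + 1)) with hT
  have hTval : T = ((m : ℚ) + 1) * 2 ^ (m + 1) + 1 := by
    have hbin : ((-2 : ℚ) + 1) ^ (m + 3)
        = ∑ k ∈ Finset.range (m + 4), (-2 : ℚ) ^ k * 1 ^ ((m + 3) - k) * ((m + 3).choose k) :=
      add_pow (-2 : ℚ) 1 (m + 3)
    have hodd : Odd (m + 3) := by rcases hEm with ⟨t, ht⟩; exact ⟨t + 1, by omega⟩
    have hL : ((-2 : ℚ) + 1) ^ (m + 3) = -1 := by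
      have : ((-2 : ℚ) + 1) = -1 := by norm_num
      rw [this, hodd.neg_one_pow]
    have hsplit : ∑ k ∈ Finset.range (m + 4), (-2 : ℚ) ^ k * 1 ^ ((m + 3) - k) * ((m + 3).choose k)
        = (∑ k ∈ Finset.range (m + 2), (-2 : ℚ) ^ k * ((m + 3).choose k))
          + (-2 : ℚ) ^ (m + 2) * ((m + 3).choose (m + 2))
          + (-2 : ℚ) ^ (m + 3) * ((m + 3).choose (m + 3)) := by
      rw [Finset.sum_range_succ, Finset.sum_range_succ]
      simp [one_pow]
    have hpeel : ∑ k ∈ Finset.range (m + 2), (-2 : ℚ) ^ k * ((m + 3).choose k)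
        = -2 * T + 1 := by
      rw [Finset.sum_range_succ']
      have : ∑ i ∈ Finset.range (m + 1), (-2 : ℚ) ^ (i + 1) * ((m + 3).choose (i + 1))
          = -2 * T := by
        rw [hT, Finset.mul_sum]
        refine Finset.sum_congr rfl fun i _ => by ring
      rw [this]; simp
    have hc1 : ((m + 3).choose (m + 2) : ℚ) = (m : ℚ) + 3 := by
      have : (m + 3).choose (m + 2) = m + 3 := by
        rw [show m + 3 = (m + 2) + 1 from rfl, Nat.choose_succ_self_right]
      rw [this]; push_cast; ring
    have hc2 : ((m + 3).choose (m + 3) : ℚ) = 1 := by simp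
    have he : ((-2 : ℚ)) ^ (m + 2) = 2 ^ (m + 2) := by
      have : Even (m + 2) := by rcases hEm with ⟨t, ht⟩; exact ⟨t + 1, by omega⟩
      exact this.neg_pow 2
    have ho : ((-2 : ℚ)) ^ (m + 3) = -(2 ^ (m + 3)) := by
      exact hodd.neg_pow 2
    rw [hL, hsplit, hpeel, hc1, hc2, he, ho] at hbin
    have h2 : (2 : ℚ) ^ (m + 3) = 4 * 2 ^ (m + 1) := by ring
    have h3 : (2 : ℚ) ^ (m + 2) = 2 * 2 ^ (m + 1) := by ring
    rw [h2, h3] at hbin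
    linarith [hbin]
  -- rewrite LHS
  have hset : Finset.Icc 1 (m + 2 - 1) = Finset.Ico 1 (m + 2) := by
    rw [show m + 2 - 1 = m + 1 from rfl, ← Finset.Ico_add_one_right_eq_Icc]; rfl
  rw [hset, Finset.sum_Ico_eq_sum_range]
  have hterm : ∀ i ∈ Finset.range (m + 2 - 1),
      ((-2 : ℚ) ^ (1 + i - 1) / (1 + i : ℕ)) * ((m + 2).choose (1 + i - 1))
        = (-2 : ℚ) ^ i * ((m + 3).choose (i + 1)) / ((m : ℚ) + 3) := by
    intro i _
    have hnat : (m + 3) * (m + 2).choose i = (m + 3).choose (i + 1) * (i + 1) := by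
      have := Nat.add_one_mul_choose_eq (m + 2) i
      simpa using this
    have hq : ((m : ℚ) + 3) * ((m + 2).choose i) = ((m + 3).choose (i + 1)) * ((i : ℚ) + 1) := by
      exact_mod_cast congrArg (Nat.cast : ℕ → ℚ) hnat
    have h1 : 1 + i - 1 = i := by omega
    rw [h1]
    have hi : ((1 + i : ℕ) : ℚ) = (i : ℚ) + 1 := by push_cast; ring
    rw [hi]
    have hiq : (i : ℚ) + 1 ≠ 0 := by positivity
    have hmq : (m : ℚ) + 3 ≠ 0 := by positivity
    field_simp
    linear_combination hq
  rw [Finset.sum_congr rfl hterm]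
  rw [show m + 2 - 1 = m + 1 from rfl, ← Finset.sum_div, ← hT, hTval]
  push_cast
  ring
end

section
/- For every positive integer n, (-1)^n · ∑_{k=1}^{n-1} (-1)^{k-1} C(n,k) 2^k H_k = (2^n - 2)·H_{n-1} + H_{⌊n/2⌋} + (2^n - 2)/n. -/
lemma H_zero : H 0 = 0 := by simp [H]

lemma H_succ (n : ℕ) : H (n + 1) = H n + 1 / (n + 1) := by
  unfold H
  rw [Finset.sum_Icc_succ_top (by omega)]
  push_cast
  ring

noncomputable def Sr (m : ℕ) : ℚ :=
  ∑ j ∈ Finset.range m, (-1 : ℚ) ^ j * ((m + 1).choose (j + 1)) * 2 ^ (j + 1) * H (j + 1)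

lemma altsum (N : ℕ) :
    ∑ i ∈ Finset.range (N + 1), (-2 : ℚ) ^ i * (N.choose i) = (-1 : ℚ) ^ N := by
  have h := add_pow (-2 : ℚ) 1 N
  norm_num at h
  rw [← h]

lemma chooseQ (m j : ℕ) :
    ((m + 1).choose j : ℚ) * (m + 2) = ((m + 2).choose (j + 1) : ℚ) * (j + 1) := by
  have h2 : ((m + 2) * (m + 1).choose j : ℕ) = ((m + 2).choose (j + 1) * (j + 1) : ℕ) :=
    Nat.add_one_mul_choose_eq (m + 1) j
  have h3 := congrArg (fun x : ℕ => (x : ℚ)) h2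
  push_cast at h3
  linarith

lemma Srec (m : ℕ) :
    Sr (m + 1) = -Sr m + (-1 : ℚ) ^ m * 2 ^ (m + 1) * H (m + 1)
      + (1 + (-2 : ℚ) ^ (m + 2) - (-1 : ℚ) ^ m) / (m + 2) := by
  have split : Sr (m + 1)
      = (∑ j ∈ Finset.range (m + 1),
          (-1 : ℚ) ^ j * ((m + 1).choose j) * 2 ^ (j + 1) * H (j + 1))
        + (∑ j ∈ Finset.range (m + 1),
          (-1 : ℚ) ^ j * ((m + 1).choose (j + 1)) * 2 ^ (j + 1) * H (j + 1)) := by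
    rw [Sr, ← Finset.sum_add_distrib]
    apply Finset.sum_congr rfl
    intro j hj
    rw [show m + 1 + 1 = m + 2 from rfl, Nat.choose_succ_succ (m + 1) j]
    push_cast
    ring
  -- second sum Q
  have hQ : (∑ j ∈ Finset.range (m + 1),
      (-1 : ℚ) ^ j * ((m + 1).choose (j + 1)) * 2 ^ (j + 1) * H (j + 1))
      = Sr m + (-1 : ℚ) ^ m * 2 ^ (m + 1) * H (m + 1) := by
    rw [Finset.sum_range_succ, Nat.choose_self]
    rw [Sr]; push_cast; ring
  -- first sum P split using H_succ
  have hP : (∑ j ∈ Finset.range (m + 1),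
      (-1 : ℚ) ^ j * ((m + 1).choose j) * 2 ^ (j + 1) * H (j + 1))
      = (∑ j ∈ Finset.range (m + 1),
          (-1 : ℚ) ^ j * ((m + 1).choose j) * 2 ^ (j + 1) * H j)
        + (∑ j ∈ Finset.range (m + 1),
          (-1 : ℚ) ^ j * ((m + 1).choose j) * 2 ^ (j + 1) * (1 / (j + 1))) := by
    rw [← Finset.sum_add_distrib]
    apply Finset.sum_congr rfl
    intro j hj
    rw [H_succ]
    ring
  have hP1 : (∑ j ∈ Finset.range (m + 1),
      (-1 : ℚ) ^ j * ((m + 1).choose j) * 2 ^ (j + 1) * H j) = -2 * Sr m := by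
    rw [Finset.sum_range_succ']
    simp only [Nat.choose_zero_right, H_zero, mul_zero, add_zero, Nat.cast_one, pow_zero]
    rw [Sr, Finset.mul_sum]
    apply Finset.sum_congr rfl
    intro j hj
    ring
  have hP2 : (∑ j ∈ Finset.range (m + 1),
      (-1 : ℚ) ^ j * ((m + 1).choose j) * 2 ^ (j + 1) * (1 / (j + 1)))
      = -(((-1 : ℚ) ^ (m + 2) - 1 - (-2 : ℚ) ^ (m + 2)) / (m + 2)) := by
    have hterm : ∀ j ∈ Finset.range (m + 1),
        (-1 : ℚ) ^ j * ((m + 1).choose j) * 2 ^ (j + 1) * (1 / (j + 1))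
          = -((-2 : ℚ) ^ (j + 1) * ((m + 2).choose (j + 1))) / (m + 2) := by
      intro j hj
      have hc := chooseQ m j
      have hj1 : ((j : ℚ) + 1) ≠ 0 := by positivity
      have hm2 : ((m : ℚ) + 2) ≠ 0 := by positivity
      rw [show (-2 : ℚ) = (-1) * 2 by norm_num, mul_pow]
      field_simp
      rw [pow_succ]
      linear_combination ((-1 : ℚ) ^ j) * hc
    have hsum : ∑ j ∈ Finset.range (m + 1), (-2 : ℚ) ^ (j + 1) * ((m + 2).choose (j + 1))
        = (-1 : ℚ) ^ (m + 2) - 1 - (-2 : ℚ) ^ (m + 2) := by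
      have h3 := altsum (m + 2)
      rw [show m + 2 + 1 = (m + 2) + 1 from rfl, Finset.sum_range_succ',
        Finset.sum_range_succ] at h3
      simp only [Nat.choose_zero_right, Nat.choose_self, Nat.cast_one, pow_zero, mul_one,
        one_mul] at h3
      linarith [h3]
    rw [Finset.sum_congr rfl hterm, ← Finset.sum_div, Finset.sum_neg_distrib, hsum]
    ring
  rw [split, hQ, hP, hP1, hP2]
  ring

noncomputable def R (n : ℕ) : ℚ :=
  ((2 : ℚ) ^ n - 2) * H (n - 1) + H (n / 2) + ((2 : ℚ) ^ n - 2) / n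

lemma Rstep (m : ℕ) :
    R (m + 2) = R (m + 1) + 2 ^ (m + 1) * H (m + 1)
      + ((2 : ℚ) ^ (m + 2) - 1 + (-1 : ℚ) ^ m) / (m + 2) := by
  have hm1 : ((m : ℚ) + 1) ≠ 0 := by positivity
  have hm2 : ((m : ℚ) + 2) ≠ 0 := by positivity
  rcases Nat.even_or_odd m with ⟨t, ht⟩ | ⟨t, ht⟩
  · subst ht
    have h1 : (t + t + 2) / 2 = t + 1 := by omega
    have h2 : (t + t + 1) / 2 = t := by omega
    have h3 : (t + t + 2) - 1 = t + t + 1 := by omega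
    have h4 : (t + t + 1) - 1 = t + t := by omega
    rw [R, R, h1, h2, h3, h4, H_succ (t + t), H_succ t]
    have hpow : (-1 : ℚ) ^ (t + t) = 1 := by
      rw [show t + t = 2 * t by ring, pow_mul]; norm_num
    rw [hpow]
    have ht1 : ((t : ℚ) + 1) ≠ 0 := by positivity
    push_cast
    field_simp
    ring
  · subst ht
    have h1 : (2 * t + 1 + 2) / 2 = t + 1 := by omega
    have h2 : (2 * t + 1 + 1) / 2 = t + 1 := by omega
    have h3 : (2 * t + 1 + 2) - 1 = 2 * t + 2 := by omega
    have h4 : (2 * t + 1 + 1) - 1 = 2 * t + 1 := by omega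
    rw [R, R, h1, h2, h3, h4, H_succ (2 * t + 1)]
    have hpow : (-1 : ℚ) ^ (2 * t + 1) = -1 := by
      rw [pow_succ, pow_mul]; norm_num
    rw [hpow]
    push_cast
    field_simp
    ring

lemma key_s6 (m : ℕ) : Sr m = (-1 : ℚ) ^ (m + 1) * R (m + 1) := by
  induction m with
  | zero => simp [Sr, R, H_zero]
  | succ m ih =>
    rw [Srec, ih, Rstep]
    have hneg : (-2 : ℚ) ^ (m + 2) = (-1 : ℚ) ^ m * 2 ^ (m + 2) := by
      rw [show (-2 : ℚ) = (-1) * 2 by norm_num, mul_pow, pow_succ, pow_succ]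
      ring
    rw [hneg, show m + 1 + 1 = m + 2 from rfl]
    rcases Nat.even_or_odd m with hme | hmo
    · have e0 : (-1 : ℚ) ^ m = 1 := hme.neg_one_pow
      have e1 : (-1 : ℚ) ^ (m + 1) = -1 := by rw [pow_succ, e0]; ring
      have e2 : (-1 : ℚ) ^ (m + 2) = 1 := by rw [pow_succ, e1]; ring
      rw [e0, e1, e2]
      ring
    · have e0 : (-1 : ℚ) ^ m = -1 := hmo.neg_one_pow
      have e1 : (-1 : ℚ) ^ (m + 1) = 1 := by rw [pow_succ, e0]; ring
      have e2 : (-1 : ℚ) ^ (m + 2) = -1 := by rw [pow_succ, e1]; ring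
      rw [e0, e1, e2]
      ring

lemma reindex (m : ℕ) (f : ℕ → ℚ) :
    (∑ k ∈ Finset.Icc 1 m, f k) = ∑ j ∈ Finset.range m, f (j + 1) := by
  induction m with
  | zero => simp
  | succ m ih => rw [Finset.sum_Icc_succ_top (by omega), Finset.sum_range_succ, ih]

lemma Sm_eq_Sr (m : ℕ) :
    (∑ k ∈ Finset.Icc 1 m, (-1 : ℚ) ^ (k - 1) * ((m + 1).choose k) * 2 ^ k * H k) = Sr m := by
  rw [reindex, Sr]
  apply Finset.sum_congr rfl
  intro j hj
  rw [Nat.add_sub_cancel]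

theorem stmt6 (n : ℕ) (hn : 0 < n) :
    (-1 : ℚ) ^ n * ∑ k ∈ Finset.Icc 1 (n - 1), (-1 : ℚ) ^ (k - 1) * (n.choose k) * 2 ^ k * H k
      = ((2 : ℚ) ^ n - 2) * H (n - 1) + H (n / 2) + ((2 : ℚ) ^ n - 2) / n := by
  obtain ⟨m, rfl⟩ : ∃ m, n = m + 1 := ⟨n - 1, by omega⟩
  rw [show m + 1 - 1 = m from rfl, Sm_eq_Sr, key_s6]
  have : (-1 : ℚ) ^ (m + 1) * ((-1 : ℚ) ^ (m + 1) * R (m + 1)) = R (m + 1) := by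
    rw [← mul_assoc, ← pow_add]
    have : Even (m + 1 + (m + 1)) := ⟨m + 1, rfl⟩
    rw [this.neg_one_pow, one_mul]
  rw [this, R]
  norm_num
end

section
/- For any prime p ≥ 3 and any k with 1 ≤ k ≤ p-1, the binomial coefficient C(p-1, k) is congruent to (-1)^k - (-1)^k·p·H_k + (-1)^k·(p²/2)·(H_k² - H_{k,2}) modulo p³, i.e., the rational number (-1)^k·C(p-1,k) - 1 + p·H_k - (p²/2)(H_k² - H_{k,2}) has p-adic valuation at least 3. -/
noncomputable def H2 (n : ℕ) : ℚ := ∑ i ∈ Finset.Icc 1 n, (1 : ℚ) / (i : ℚ) ^ 2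

noncomputable def Aaux (p k : ℕ) : ℚ := 1 - (p : ℚ) * H k + ((p : ℚ) ^ 2 / 2) * (H k ^ 2 - H2 k)

section aux
variable (p : ℕ) [hp : Fact p.Prime]

lemma norm_nat_one {i : ℕ} (hi1 : 1 ≤ i) (hi : i < p) : padicNorm p (i : ℚ) = 1 :=
  (padicNorm.nat_eq_one_iff i).2 (fun h => absurd (Nat.le_of_dvd (by omega) h) (by omega))

lemma norm_inv_le {i : ℕ} (hi1 : 1 ≤ i) (hi : i < p) : padicNorm p ((1:ℚ)/i) ≤ 1 := by
  rw [padicNorm.div, padicNorm.one, norm_nat_one p hi1 hi]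
  norm_num

lemma norm_H_le {k : ℕ} (hk : k < p) : padicNorm p (H k) ≤ 1 :=
  padicNorm.sum_le' (fun i hi => norm_inv_le p (Finset.mem_Icc.1 hi).1
    (lt_of_le_of_lt (Finset.mem_Icc.1 hi).2 hk)) zero_le_one

lemma norm_H2_le {k : ℕ} (hk : k < p) : padicNorm p (H2 k) ≤ 1 := by
  refine padicNorm.sum_le' (fun i hi => ?_) zero_le_one
  have h1 := (Finset.mem_Icc.1 hi).1
  have h2 : i < p := lt_of_le_of_lt (Finset.mem_Icc.1 hi).2 hk
  have : (1:ℚ)/(i:ℚ)^2 = ((1:ℚ)/i) * ((1:ℚ)/i) := by ring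
  rw [this, padicNorm.mul]
  exact mul_le_one₀ (norm_inv_le p h1 h2) (padicNorm.nonneg _) (norm_inv_le p h1 h2)

lemma key_s7 (hp3 : 3 ≤ p) : ∀ k, k ≤ p - 1 →
    padicNorm p ((-1 : ℚ) ^ k * ((p - 1).choose k) - Aaux p k) ≤ (p:ℚ)^(-3:ℤ) := by
  intro k
  induction k with
  | zero =>
    intro _
    have : (-1 : ℚ) ^ 0 * ((p - 1).choose 0) - Aaux p 0 = 0 := by
      simp [Aaux, H, H2]
    rw [this, padicNorm.zero]
    positivity
  | succ k ih =>
    intro hk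
    have hk' : k ≤ p - 1 := by omega
    have hkp : k + 1 < p := by omega
    have IH := ih hk'
    have hk1 : ((k:ℚ) + 1) ≠ 0 := by positivity
    -- choose recurrence
    have hchoose : (((p-1).choose (k+1)) : ℚ) * ((k:ℚ)+1) = (((p-1).choose k) : ℚ) * ((p:ℚ) - 1 - k) := by
      have := Nat.choose_succ_right_eq (p-1) k
      have hsub : ((p - 1 - k : ℕ) : ℚ) = (p:ℚ) - 1 - k := by
        have : ((p - 1 - k : ℕ) : ℚ) = ((p:ℕ):ℚ) - 1 - k := by
          push_cast [Nat.cast_sub (show k ≤ p - 1 by omega), Nat.cast_sub (show 1 ≤ p by omega)]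
          ring
        simpa using this
      calc (((p-1).choose (k+1)) : ℚ) * ((k:ℚ)+1)
          = (((p-1).choose (k+1) * (k+1) : ℕ) : ℚ) := by push_cast; ring
        _ = (((p-1).choose k * (p - 1 - k) : ℕ) : ℚ) := by rw [this]
        _ = (((p-1).choose k) : ℚ) * ((p:ℚ) - 1 - k) := by push_cast [hsub]; ring
    have hH : H (k+1) = H k + 1/((k:ℚ)+1) := by
      rw [H, Finset.sum_Icc_succ_top (by omega : 1 ≤ k + 1)]
      push_cast [H]; ring
    have hH2 : H2 (k+1) = H2 k + 1/((k:ℚ)+1)^2 := by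
      rw [H2, Finset.sum_Icc_succ_top (by omega : 1 ≤ k + 1)]
      push_cast [H2]; ring
    -- main algebraic identity
    have hD : (-1 : ℚ) ^ (k+1) * ((p - 1).choose (k+1)) - Aaux p (k+1) =
        ((-1 : ℚ) ^ k * ((p - 1).choose k) - Aaux p k) * (1 - (p:ℚ)/((k:ℚ)+1))
        - (p:ℚ)^3 * ((H k ^ 2 - H2 k) * ((1:ℚ)/2) * ((1:ℚ)/((k:ℚ)+1))) := by
      have hC : (((p-1).choose (k+1)) : ℚ) = (((p-1).choose k) : ℚ) * ((p:ℚ) - 1 - k) / ((k:ℚ)+1) := by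
        field_simp at hchoose ⊢
        linarith [hchoose]
      rw [hC]
      simp only [Aaux, hH, hH2, pow_succ]
      field_simp
      ring
    rw [hD]
    refine le_trans padicNorm.sub (max_le ?_ ?_)
    · rw [padicNorm.mul]
      have h2 : padicNorm p (1 - (p:ℚ)/((k:ℚ)+1)) ≤ 1 := by
        refine le_trans padicNorm.sub (max_le ?_ ?_)
        · simp [padicNorm.one]
        · have : (p:ℚ)/((k:ℚ)+1) = (p:ℚ) * ((1:ℚ)/((k+1:ℕ):ℚ)) := by push_cast; ring
          rw [this, padicNorm.mul]
          have hnp : padicNorm p (p:ℚ) ≤ 1 := by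
            rw [padicNorm.padicNorm_p hp.out.one_lt]
            exact inv_le_one_of_one_le₀ (by exact_mod_cast hp.out.one_le)
          exact mul_le_one₀ hnp (padicNorm.nonneg _) (norm_inv_le p (by omega) hkp)
      calc padicNorm p _ * padicNorm p _ ≤ (p:ℚ)^(-3:ℤ) * 1 :=
            mul_le_mul IH h2 (padicNorm.nonneg _) (by positivity)
        _ = (p:ℚ)^(-3:ℤ) := by ring
    · rw [padicNorm.mul]
      have hnp3 : padicNorm p ((p:ℚ)^3) = (p:ℚ)^(-3:ℤ) := by
        rw [show ((p:ℚ)^3) = (p:ℚ)*(p:ℚ)*(p:ℚ) by ring, padicNorm.mul, padicNorm.mul,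
          padicNorm.padicNorm_p hp.out.one_lt]
        have hp0 : ((p:ℚ)) ≠ 0 := by positivity
        rw [show (-3:ℤ) = (-1) + (-1) + (-1) by norm_num, zpow_add₀ hp0, zpow_add₀ hp0,
          zpow_neg_one]
      have hX : padicNorm p ((H k ^ 2 - H2 k) * ((1:ℚ)/2) * ((1:ℚ)/((k:ℚ)+1))) ≤ 1 := by
        rw [padicNorm.mul, padicNorm.mul]
        have hkq : ((1:ℚ)/((k:ℚ)+1)) = (1:ℚ)/((k+1:ℕ):ℚ) := by push_cast; ring
        have h1 : padicNorm p (H k ^ 2 - H2 k) ≤ 1 := by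
          refine le_trans padicNorm.sub (max_le ?_ (norm_H2_le p (by omega)))
          rw [sq, padicNorm.mul]
          exact mul_le_one₀ (norm_H_le p (by omega)) (padicNorm.nonneg _) (norm_H_le p (by omega))
        have h2 : padicNorm p ((1:ℚ)/2) ≤ 1 := by
          have : ((1:ℚ)/2) = (1:ℚ)/((2:ℕ):ℚ) := by norm_num
          rw [this]; exact norm_inv_le p (by omega) (by omega)
        have h3 : padicNorm p ((1:ℚ)/((k:ℚ)+1)) ≤ 1 := by
          rw [hkq]; exact norm_inv_le p (by omega) hkp
        exact mul_le_one₀ (mul_le_one₀ h1 (padicNorm.nonneg _) h2) (padicNorm.nonneg _) h3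
      calc padicNorm p _ * padicNorm p _ ≤ (p:ℚ)^(-3:ℤ) * 1 := by
            rw [hnp3]
            exact mul_le_mul_of_nonneg_left hX (by positivity)
        _ = (p:ℚ)^(-3:ℤ) := by ring
end aux

theorem stmt7 (p : ℕ) (hp : p.Prime) (hp3 : 3 ≤ p) (k : ℕ) (hk1 : 1 ≤ k) (hk2 : k ≤ p - 1) :
    ((-1 : ℚ) ^ k * ((p - 1).choose k)) - (1 - (p : ℚ) * H k + ((p : ℚ) ^ 2 / 2) * (H k ^ 2 - H2 k)) = 0 ∨ (3 : ℤ) ≤ padicValRat p (((-1 : ℚ) ^ k * ((p - 1).choose k)) - (1 - (p : ℚ) * H k + ((p : ℚ) ^ 2 / 2) * (H k ^ 2 - H2 k))) := by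
  haveI : Fact p.Prime := ⟨hp⟩
  have h := key_s7 p hp3 k hk2
  rw [show Aaux p k = 1 - (p : ℚ) * H k + ((p : ℚ) ^ 2 / 2) * (H k ^ 2 - H2 k) from rfl] at h
  set D := ((-1 : ℚ) ^ k * ((p - 1).choose k)) - (1 - (p : ℚ) * H k + ((p : ℚ) ^ 2 / 2) * (H k ^ 2 - H2 k)) with hDdef
  by_cases hD0 : D = 0
  · exact Or.inl hD0
  · right
    rw [padicNorm.eq_zpow_of_nonzero hD0] at h
    have hp1 : (1:ℚ) < p := by exact_mod_cast hp.one_lt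
    have := (zpow_le_zpow_iff_right₀ hp1).1 h
    omega
end

section
/- Let p > 3 be a prime. Then ∑_{k=1}^{p-1} (1/k²)·C(p-1, k) ≡ (3p/4)·B_{p-3} (mod p²). -/
open Finset

namespace St17

variable {p : ℕ} [hp : Fact p.Prime]

lemma nat_le_one (n : ℕ) : ‖(n : ℚ_[p])‖ ≤ 1 := by
  have := Padic.norm_int_le_one (p := p) (n : ℤ)
  simpa using this

lemma int_le_one (z : ℤ) : ‖(z : ℚ_[p])‖ ≤ 1 := Padic.norm_int_le_one z

lemma nat_unit {k : ℕ} (h0 : k ≠ 0) (hk : k < p) : ‖(k : ℚ_[p])‖ = 1 := by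
  refine le_antisymm (nat_le_one k) ?_
  by_contra hlt
  push_neg at hlt
  have hcast : ((k : ℤ) : ℚ_[p]) = (k : ℚ_[p]) := by push_cast; ring
  have hdvd := (Padic.norm_intCast_lt_one_iff (p := p) (k := (k : ℤ))).mp (by rw [hcast]; exact hlt)
  have : p ∣ k := by exact_mod_cast hdvd
  have := Nat.le_of_dvd (Nat.pos_of_ne_zero h0) this
  omega

lemma inv_nat_unit {k : ℕ} (h0 : k ≠ 0) (hk : k < p) : ‖((k : ℚ_[p]))⁻¹‖ = 1 := by
  rw [norm_inv, nat_unit h0 hk]; norm_num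

lemma int_dvd_le {z : ℤ} (hz : (p : ℤ) ∣ z) : ‖(z : ℚ_[p])‖ ≤ (p : ℝ)⁻¹ := by
  obtain ⟨w, rfl⟩ := hz
  push_cast
  rw [norm_mul, Padic.norm_p]
  have h1 : ‖(w : ℚ_[p])‖ ≤ 1 := int_le_one w
  have h2 : (0:ℝ) ≤ (p : ℝ)⁻¹ := by positivity
  calc (p:ℝ)⁻¹ * ‖(w : ℚ_[p])‖ ≤ (p:ℝ)⁻¹ * 1 := by gcongr
    _ = (p:ℝ)⁻¹ := by ring

lemma padd {a b : ℚ_[p]} {c : ℝ} (ha : ‖a‖ ≤ c) (hb : ‖b‖ ≤ c) : ‖a + b‖ ≤ c :=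
  (Padic.nonarchimedean a b).trans (max_le ha hb)

lemma psub {a b : ℚ_[p]} {c : ℝ} (ha : ‖a‖ ≤ c) (hb : ‖b‖ ≤ c) : ‖a - b‖ ≤ c := by
  rw [sub_eq_add_neg]; exact padd ha (by rwa [norm_neg])

lemma pmul {a b : ℚ_[p]} {c d : ℝ} (ha : ‖a‖ ≤ c) (hb : ‖b‖ ≤ d) (hc : 0 ≤ c) :
    ‖a * b‖ ≤ c * d := by
  rw [norm_mul]
  exact mul_le_mul ha hb (norm_nonneg b) hc

lemma pmul1 {a b : ℚ_[p]} {c : ℝ} (ha : ‖a‖ ≤ c) (hb : ‖b‖ ≤ 1) : ‖a * b‖ ≤ c := by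
  have := pmul ha hb ((norm_nonneg a).trans ha)
  simpa using this

lemma pone {a : ℚ_[p]} {c : ℝ} (ha : ‖a‖ = 1) (hc : 1 ≤ c) : ‖a‖ ≤ c := le_of_eq_of_le ha hc

lemma psum {ι : Type*} {s : Finset ι} {f : ι → ℚ_[p]} {c : ℝ} (hc : 0 ≤ c)
    (h : ∀ i ∈ s, ‖f i‖ ≤ c) : ‖∑ i ∈ s, f i‖ ≤ c :=
  IsUltrametricDist.norm_sum_le_of_forall_le_of_nonneg hc h

lemma neg_one_pow_norm (k : ℕ) : ‖((-1 : ℚ_[p]))^k‖ = 1 := by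
  rw [norm_pow, norm_neg, norm_one, one_pow]

/-- even/odd split of a sum over `Icc 1 (p-1)` when `p = 2m+1`. -/
lemma split {m : ℕ} (hm : p = 2 * m + 1) (F : ℕ → ℚ_[p]) :
    ∑ k ∈ Icc 1 (p - 1), F k = ∑ j ∈ Icc 1 m, (F (2 * j) + F (p - 2 * j)) := by
  rw [sum_add_distrib]
  rw [← Finset.sum_filter_add_sum_filter_not (Icc 1 (p - 1)) (fun k => k % 2 = 0) F]
  congr 1
  · refine sum_nbij' (fun k => k / 2) (fun j => 2 * j) ?_ ?_ ?_ ?_ ?_ <;>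
      intro a ha <;> simp only [mem_filter, mem_Icc] at ha ⊢
    · omega
    · omega
    · omega
    · omega
    · have : 2 * (a / 2) = a := by omega
      rw [this]
  · refine sum_nbij' (fun k => (p - k) / 2) (fun j => p - 2 * j) ?_ ?_ ?_ ?_ ?_ <;>
      intro a ha <;> simp only [mem_filter, mem_Icc] at ha ⊢
    · omega
    · omega
    · omega
    · omega
    · have : p - 2 * ((p - a) / 2) = a := by omega
      rw [this]

end St17

namespace St17
open Finset
variable {p : ℕ} [hp : Fact p.Prime]

noncomputable def Hq (p : ℕ) [Fact p.Prime] (k : ℕ) : ℚ_[p] :=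
  ∑ j ∈ Icc 1 k, ((j : ℚ_[p]))⁻¹

lemma Hq_le_one {k : ℕ} (hk : k < p) : ‖Hq p k‖ ≤ 1 := by
  refine psum zero_le_one ?_
  intro j hj
  simp only [mem_Icc] at hj
  exact le_of_eq (inv_nat_unit (by omega) (by omega))

lemma cast_psub {a : ℕ} (h : a ≤ p) : ((p - a : ℕ) : ℚ_[p]) = (p : ℚ_[p]) - a := by
  push_cast [h]; ring

lemma cast_psub_ne {a : ℕ} (h0 : 0 < a) (h1 : a < p) : ((p - a : ℕ) : ℚ_[p]) ≠ 0 := by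
  have : ‖((p - a : ℕ) : ℚ_[p])‖ = 1 := nat_unit (by omega) (by omega)
  intro hc; rw [hc] at this; simp at this

lemma cast_nat_ne {a : ℕ} (h0 : a ≠ 0) : ((a : ℚ_[p])) ≠ 0 := by
  exact_mod_cast (Nat.cast_ne_zero (R := ℚ_[p])).mpr h0

lemma p_pow_mul_le (n : ℕ) {x : ℚ_[p]} (hx : ‖x‖ ≤ 1) :
    ‖(p : ℚ_[p])^n * x‖ ≤ ((p : ℝ)⁻¹)^n := by
  rw [norm_mul, norm_pow, Padic.norm_p]
  exact mul_le_of_le_one_right (by positivity) hx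

lemma p_mul_le {x : ℚ_[p]} (hx : ‖x‖ ≤ 1) : ‖(p : ℚ_[p]) * x‖ ≤ (p : ℝ)⁻¹ := by
  have := p_pow_mul_le 1 hx
  simpa using this

lemma pair_inv {A B : ℚ_[p]} (hA : A ≠ 0) (hB : B ≠ 0) :
    A⁻¹ + B⁻¹ = (A + B) * (A⁻¹ * B⁻¹) := by field_simp; ring

lemma pair_inv3 {A B : ℚ_[p]} (hA : A ≠ 0) (hB : B ≠ 0) :
    (A^3)⁻¹ + (B^3)⁻¹ = (A + B) * ((A^2 - A*B + B^2) * (A^3*B^3)⁻¹) := by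
  field_simp; ring

lemma pair_L3 {A B : ℚ_[p]} (hA : A ≠ 0) (hB : B ≠ 0) :
    (A^2)⁻¹ - (B^2)⁻¹ + 2*(A+B)*(A^3)⁻¹ = (A+B)^2 * ((2*B - A) * (A^3*B^2)⁻¹) := by
  field_simp; ring

/-- norm of mixed integer polynomial in two nat casts is ≤ 1 -/
lemma mix_le_one (a b : ℕ) : ‖((a:ℚ_[p])^2 - a*b + b^2)‖ ≤ 1 := by
  have : ((a:ℚ_[p])^2 - a*b + b^2) = (((a:ℤ)^2 - a*b + b^2 : ℤ) : ℚ_[p]) := by push_cast; ring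
  rw [this]; exact int_le_one _

lemma mix2_le_one (a b : ℕ) : ‖(2*(b:ℚ_[p]) - a)‖ ≤ 1 := by
  have : (2*(b:ℚ_[p]) - a) = ((2*(b:ℤ) - a : ℤ) : ℚ_[p]) := by push_cast; ring
  rw [this]; exact int_le_one _

section withm
variable {m : ℕ}

lemma hAne (hm : p = 2*m+1) {j : ℕ} (hj : 1 ≤ j ∧ j ≤ m) : ((2 * j : ℕ) : ℚ_[p]) ≠ 0 :=
  cast_nat_ne (by omega)

lemma hBne (hm : p = 2*m+1) {j : ℕ} (hj : 1 ≤ j ∧ j ≤ m) : ((p - 2 * j : ℕ) : ℚ_[p]) ≠ 0 :=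
  cast_psub_ne (by omega) (by omega)

lemma hABp (hm : p = 2*m+1) {j : ℕ} (hj : 1 ≤ j ∧ j ≤ m) :
    ((2 * j : ℕ) : ℚ_[p]) + ((p - 2 * j : ℕ) : ℚ_[p]) = (p : ℚ_[p]) := by
  rw [cast_psub (by omega)]; push_cast; ring

lemma normA (hm : p = 2*m+1) {j : ℕ} (hj : 1 ≤ j ∧ j ≤ m) : ‖((2 * j : ℕ) : ℚ_[p])‖ = 1 :=
  nat_unit (by omega) (by omega)

lemma normB (hm : p = 2*m+1) {j : ℕ} (hj : 1 ≤ j ∧ j ≤ m) : ‖((p - 2 * j : ℕ) : ℚ_[p])‖ = 1 :=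
  nat_unit (by omega) (by omega)

/-- ‖H_{p-1}‖ ≤ 1/p -/
lemma H1_bound (hm : p = 2 * m + 1) : ‖Hq p (p - 1)‖ ≤ (p : ℝ)⁻¹ := by
  rw [Hq, split hm]
  refine psum (by positivity) ?_
  intro j hj
  simp only [mem_Icc] at hj
  rw [pair_inv (hAne hm hj) (hBne hm hj), hABp hm hj]
  refine p_mul_le ?_
  rw [norm_mul, norm_inv, norm_inv, normA hm hj, normB hm hj]
  norm_num

/-- ‖H3‖ ≤ 1/p where H3 = ∑ 1/k³ -/
lemma H3_bound (hm : p = 2 * m + 1) :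
    ‖∑ k ∈ Icc 1 (p - 1), (((k : ℚ_[p]))^3)⁻¹‖ ≤ (p : ℝ)⁻¹ := by
  rw [split hm]
  refine psum (by positivity) ?_
  intro j hj
  simp only [mem_Icc] at hj
  rw [pair_inv3 (hAne hm hj) (hBne hm hj), hABp hm hj]
  refine p_mul_le ?_
  rw [norm_mul]
  refine mul_le_one₀ (mix_le_one _ _) (norm_nonneg _) (le_of_eq ?_)
  rw [norm_inv, norm_mul, norm_pow, norm_pow, normA hm hj, normB hm hj]
  norm_num

/-- L3 : ‖Σ₁ + (p/4)·T3‖ ≤ p⁻² -/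
lemma L3_bound (hm : p = 2 * m + 1) :
    ‖(∑ k ∈ Icc 1 (p - 1), (-1 : ℚ_[p])^k * (((k : ℚ_[p]))^2)⁻¹) +
      (p : ℚ_[p])/4 * (∑ j ∈ Icc 1 m, (((j : ℚ_[p]))^3)⁻¹)‖ ≤ ((p : ℝ)⁻¹)^2 := by
  rw [split hm (fun k => (-1 : ℚ_[p])^k * (((k : ℚ_[p]))^2)⁻¹), mul_sum, ← sum_add_distrib]
  refine psum (by positivity) ?_
  intro j hj
  simp only [mem_Icc] at hj
  have hA := hAne hm hj
  have hB := hBne hm hj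
  have hsA : ((-1 : ℚ_[p]))^(2*j) = 1 := by rw [pow_mul]; norm_num
  have hsB : ((-1 : ℚ_[p]))^(p - 2*j) = -1 := Odd.neg_one_pow (Nat.odd_iff.mpr (by omega))
  have hq4 : (p : ℚ_[p])/4 * (((j : ℚ_[p]))^3)⁻¹
      = 2*((p:ℚ_[p])) * ((((2*j : ℕ) : ℚ_[p]))^3)⁻¹ := by
    have hj0 : ((j : ℚ_[p])) ≠ 0 := cast_nat_ne (by omega)
    push_cast
    field_simp
    ring
  rw [hsA, hsB, one_mul, neg_one_mul, hq4, ← hABp hm hj]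
  have key := pair_L3 hA hB
  rw [sub_add_eq_add_sub] at key
  -- rearrange: a - b + c  vs  a + c - b ... just recombine
  have key2 : (((2*j : ℕ) : ℚ_[p])^2)⁻¹ + -((((p - 2*j : ℕ) : ℚ_[p]))^2)⁻¹ +
      2*(((2*j : ℕ) : ℚ_[p]) + ((p - 2*j : ℕ) : ℚ_[p])) * ((((2*j : ℕ) : ℚ_[p]))^3)⁻¹
      = (((2*j : ℕ) : ℚ_[p]) + ((p - 2*j : ℕ) : ℚ_[p]))^2 *
        ((2*((p - 2*j : ℕ) : ℚ_[p]) - ((2*j : ℕ) : ℚ_[p])) *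
          ((((2*j : ℕ) : ℚ_[p]))^3 * (((p - 2*j : ℕ) : ℚ_[p]))^2)⁻¹) := by
    rw [← pair_L3 hA hB]; ring
  rw [key2, hABp hm hj]
  rw [show ((p:ℚ_[p]))^2 * ((2*((p - 2*j : ℕ) : ℚ_[p]) - ((2*j : ℕ) : ℚ_[p])) *
      ((((2*j : ℕ) : ℚ_[p]))^3 * (((p - 2*j : ℕ) : ℚ_[p]))^2)⁻¹) =
      (p:ℚ_[p])^2 * ((2*((p - 2*j : ℕ) : ℚ_[p]) - ((2*j : ℕ) : ℚ_[p])) *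
      ((((2*j : ℕ) : ℚ_[p]))^3 * (((p - 2*j : ℕ) : ℚ_[p]))^2)⁻¹) from rfl]
  refine p_pow_mul_le 2 ?_
  rw [norm_mul]
  refine mul_le_one₀ (mix2_le_one _ _) (norm_nonneg _) (le_of_eq ?_)
  rw [norm_inv, norm_mul, norm_pow, norm_pow, normA hm hj, normB hm hj]
  norm_num

/-- L4 : Σ₃ = T3/4 - H3 exactly -/
lemma L4_eq (hm : p = 2 * m + 1) :
    (∑ k ∈ Icc 1 (p - 1), (-1 : ℚ_[p])^k * (((k : ℚ_[p]))^3)⁻¹) =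
      (∑ j ∈ Icc 1 m, (((j : ℚ_[p]))^3)⁻¹)/4
        - ∑ k ∈ Icc 1 (p - 1), (((k : ℚ_[p]))^3)⁻¹ := by
  rw [eq_sub_iff_add_eq, split hm (fun k => (-1 : ℚ_[p])^k * (((k : ℚ_[p]))^3)⁻¹),
    split hm (fun k => (((k : ℚ_[p]))^3)⁻¹), sum_div, ← sum_add_distrib]
  refine sum_congr rfl ?_
  intro j hj
  simp only [mem_Icc] at hj
  have hj0 : ((j : ℚ_[p])) ≠ 0 := cast_nat_ne (by omega)
  have hsA : ((-1 : ℚ_[p]))^(2*j) = 1 := by rw [pow_mul]; norm_num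
  have hsB : ((-1 : ℚ_[p]))^(p - 2*j) = -1 := Odd.neg_one_pow (Nat.odd_iff.mpr (by omega))
  rw [hsA, hsB]
  push_cast
  field_simp
  ring

end withm
end St17

namespace St17
open Finset
variable {p : ℕ} [hp : Fact p.Prime]

lemma Icc_one_eq_Ioc (n : ℕ) : Icc 1 n = Ioc 0 n := by
  rw [← Finset.Icc_add_one_left_eq_Ioc]; rfl

lemma Hq_succ_top {k : ℕ} : Hq p (k + 1) = Hq p k + (((k+1 : ℕ) : ℚ_[p]))⁻¹ := by
  rw [Hq, Hq, Finset.sum_Icc_succ_top (by omega)]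

/-- H_{p-k} = H_{p-1} + H_k - 1/k - p·c -/
lemma Hq_reflect (h5 : 5 ≤ p) {k : ℕ} (hk1 : 1 ≤ k) (hk2 : k ≤ p - 1) :
    ∃ c : ℚ_[p], ‖c‖ ≤ 1 ∧
      Hq p (p - k) = Hq p (p - 1) + Hq p k - ((k : ℚ_[p]))⁻¹ - (p : ℚ_[p]) * c := by
  obtain ⟨k', rfl⟩ : ∃ k', k = k' + 1 := ⟨k - 1, by omega⟩
  refine ⟨∑ i ∈ Ioc 0 k', ((i : ℚ_[p]))⁻¹ * (((p - i : ℕ) : ℚ_[p]))⁻¹, ?_, ?_⟩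
  · refine psum zero_le_one ?_
    intro i hi
    simp only [mem_Ioc] at hi
    rw [norm_mul, inv_nat_unit (by omega) (by omega), inv_nat_unit (by omega) (by omega)]
    norm_num
  · have hsplit := Finset.sum_Ioc_consecutive (fun j => ((j : ℚ_[p]))⁻¹)
      (show 0 ≤ p - (k'+1) by omega) (show p - (k'+1) ≤ p - 1 by omega)
    have hR : (∑ j ∈ Ioc (p - (k'+1)) (p - 1), ((j : ℚ_[p]))⁻¹)
        = ∑ i ∈ Ioc 0 k', (((p - i : ℕ) : ℚ_[p]))⁻¹ := by
      refine sum_nbij' (fun j => p - j) (fun i => p - i) ?_ ?_ ?_ ?_ ?_ <;>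
        intro a ha <;> simp only [mem_Ioc] at ha ⊢
      · omega
      · omega
      · omega
      · omega
      · have : p - (p - a) = a := by omega
        rw [this]
    have hpair : ∀ i ∈ Ioc 0 k', (((p - i : ℕ) : ℚ_[p]))⁻¹
        = -((i : ℚ_[p]))⁻¹ + (p : ℚ_[p]) * (((i : ℚ_[p]))⁻¹ * (((p - i : ℕ) : ℚ_[p]))⁻¹) := by
      intro i hi
      simp only [mem_Ioc] at hi
      have hA : ((i : ℚ_[p])) ≠ 0 := cast_nat_ne (by omega)
      have hB : (((p - i : ℕ) : ℚ_[p])) ≠ 0 := cast_psub_ne (by omega) (by omega)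
      have hAB : ((i : ℚ_[p])) + ((p - i : ℕ) : ℚ_[p]) = (p : ℚ_[p]) := by
        rw [cast_psub (by omega)]; ring
      have := pair_inv hA hB
      rw [hAB] at this
      linear_combination this
    rw [sum_congr rfl hpair, sum_add_distrib, ← mul_sum, sum_neg_distrib] at hR
    have hHk' : (∑ i ∈ Ioc 0 k', ((i : ℚ_[p]))⁻¹) = Hq p k' := by rw [Hq, Icc_one_eq_Ioc]
    rw [hHk'] at hR
    have hHq : Hq p (p - (k'+1)) = ∑ j ∈ Ioc 0 (p - (k'+1)), ((j : ℚ_[p]))⁻¹ := by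
      rw [Hq, Icc_one_eq_Ioc]
    have hH1 : Hq p (p - 1) = ∑ j ∈ Ioc 0 (p - 1), ((j : ℚ_[p]))⁻¹ := by
      rw [Hq, Icc_one_eq_Ioc]
    rw [Hq_succ_top]
    have hki : (((k' + 1 : ℕ) : ℚ_[p])) = ((k' : ℚ_[p]) + 1) := by push_cast; ring
    rw [hHq, hH1, ← hsplit, hR]
    ring
  
/-- 1/(p-k)² = 1/k² + p·d -/
lemma inv_sq_reflect {k : ℕ} (hk1 : 1 ≤ k) (hk2 : k ≤ p - 1) :
    ∃ d : ℚ_[p], ‖d‖ ≤ 1 ∧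
      ((((p - k : ℕ) : ℚ_[p]))^2)⁻¹ = (((k : ℚ_[p]))^2)⁻¹ + (p : ℚ_[p]) * d := by
  have h2 : (2:ℕ) ≤ p := hp.out.two_le
  have hA : ((k : ℚ_[p])) ≠ 0 := cast_nat_ne (by omega)
  have hB : (((p - k : ℕ) : ℚ_[p])) ≠ 0 := cast_psub_ne (by omega) (by omega)
  have hAB : ((k : ℚ_[p])) + ((p - k : ℕ) : ℚ_[p]) = (p : ℚ_[p]) := by
    rw [cast_psub (by omega)]; ring
  refine ⟨((k : ℚ_[p]) - ((p - k : ℕ) : ℚ_[p])) * (((k : ℚ_[p]))^2 * (((p - k : ℕ) : ℚ_[p]))^2)⁻¹,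
    ?_, ?_⟩
  · rw [norm_mul]
    have hz : ((k : ℚ_[p]) - ((p - k : ℕ) : ℚ_[p])) = ((2*(k:ℤ) - p : ℤ) : ℚ_[p]) := by
      rw [cast_psub (by omega)]; push_cast; ring
    refine mul_le_one₀ (by rw [hz]; exact int_le_one _) (norm_nonneg _) (le_of_eq ?_)
    rw [norm_inv, norm_mul, norm_pow, norm_pow, nat_unit (by omega) (by omega),
      nat_unit (p := p) (by omega) (by omega)]
    norm_num
  · have key : ((((p - k : ℕ) : ℚ_[p]))^2)⁻¹ - (((k : ℚ_[p]))^2)⁻¹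
        = (((k : ℚ_[p])) + ((p - k : ℕ) : ℚ_[p])) *
          ((((k : ℚ_[p])) - ((p - k : ℕ) : ℚ_[p])) * (((k : ℚ_[p]))^2 * (((p - k : ℕ) : ℚ_[p]))^2)⁻¹) := by
      field_simp
      ring
    rw [hAB] at key
    linear_combination key

lemma neg_one_pow_reflect (hodd : Odd p) {k : ℕ} (hk : k ≤ p) :
    ((-1 : ℚ_[p]))^(p - k) = -(-1)^k := by
  have e1 : ((-1 : ℚ_[p]))^(p - k) * ((-1))^(2*k) = (-1)^(p + k) := by
    rw [← pow_add]; congr 1; omega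
  have e2 : ((-1 : ℚ_[p]))^(2*k) = 1 := by rw [pow_mul]; norm_num
  have e3 : ((-1 : ℚ_[p]))^(p + k) = (-1)^p * (-1)^k := pow_add _ _ _
  have e4 : ((-1 : ℚ_[p]))^p = -1 := Odd.neg_one_pow hodd
  rw [e2, mul_one, e3, e4] at e1
  rw [e1]; ring

end St17

namespace St17
open Finset
variable {p : ℕ} [hp : Fact p.Prime]

/-- L2 : ‖Σ₂ - Σ₃/2‖ ≤ 1/p -/
lemma L2_bound {m : ℕ} (h5 : 5 ≤ p) (hm : p = 2*m+1) :
    ‖(∑ k ∈ Icc 1 (p-1), (-1:ℚ_[p])^k * Hq p k * (((k:ℚ_[p]))^2)⁻¹) -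
      (∑ k ∈ Icc 1 (p-1), (-1:ℚ_[p])^k * (((k:ℚ_[p]))^3)⁻¹)/2‖ ≤ (p:ℝ)⁻¹ := by
  have hodd : Odd p := ⟨m, by omega⟩
  set S2 : ℚ_[p] := ∑ k ∈ Icc 1 (p-1), (-1:ℚ_[p])^k * Hq p k * (((k:ℚ_[p]))^2)⁻¹ with hS2
  set S3 : ℚ_[p] := ∑ k ∈ Icc 1 (p-1), (-1:ℚ_[p])^k * (((k:ℚ_[p]))^3)⁻¹ with hS3
  have hrefl : S2 = ∑ k ∈ Icc 1 (p-1),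
      (-1:ℚ_[p])^(p-k) * Hq p (p-k) * ((((p-k : ℕ):ℚ_[p]))^2)⁻¹ := by
    rw [hS2]
    refine sum_nbij' (fun k => p - k) (fun k => p - k) ?_ ?_ ?_ ?_ ?_ <;>
      intro a ha <;> simp only [mem_Icc] at ha ⊢
    · omega
    · omega
    · omega
    · omega
    · have h1 : p - (p - a) = a := by omega
      rw [h1]
  have hkey : ‖2*S2 - S3‖ ≤ (p:ℝ)⁻¹ := by
    have h2S : 2*S2 - S3 = ∑ k ∈ Icc 1 (p-1),
        (((-1:ℚ_[p])^k * Hq p k * (((k:ℚ_[p]))^2)⁻¹ +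
          (-1:ℚ_[p])^(p-k) * Hq p (p-k) * ((((p-k : ℕ):ℚ_[p]))^2)⁻¹) -
          (-1:ℚ_[p])^k * (((k:ℚ_[p]))^3)⁻¹) := by
      rw [two_mul]
      nth_rewrite 2 [hrefl]
      rw [hS2, hS3, ← sum_add_distrib, ← sum_sub_distrib]
    rw [h2S]
    refine psum (by positivity) ?_
    intro k hk
    simp only [mem_Icc] at hk
    obtain ⟨hk1, hk2⟩ := hk
    obtain ⟨c, hc, hH⟩ := Hq_reflect h5 hk1 hk2
    obtain ⟨d, hd, hD⟩ := inv_sq_reflect hk1 hk2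
    have hs := neg_one_pow_reflect (p := p) hodd (show k ≤ p by omega)
    have hk0 : ((k:ℚ_[p])) ≠ 0 := cast_nat_ne (by omega)
    have hterm : (((-1:ℚ_[p])^k * Hq p k * (((k:ℚ_[p]))^2)⁻¹ +
          (-1:ℚ_[p])^(p-k) * Hq p (p-k) * ((((p-k : ℕ):ℚ_[p]))^2)⁻¹) -
          (-1:ℚ_[p])^k * (((k:ℚ_[p]))^3)⁻¹)
        = (-1:ℚ_[p])^k * (-(Hq p (p-1)) * ((((k:ℚ_[p]))^2)⁻¹ + (p:ℚ_[p])*d))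
          + (p:ℚ_[p]) * ((-1:ℚ_[p])^k *
            (-(Hq p k * d) + ((k:ℚ_[p]))⁻¹ * d + c * (((k:ℚ_[p]))^2)⁻¹ + (p:ℚ_[p]) * (c*d))) := by
      rw [hs, hH, hD]
      simp only [← inv_pow]
      ring
    rw [hterm]
    refine padd ?_ ?_
    · have h1 : ‖(-1:ℚ_[p])^k * (-(Hq p (p-1)) * ((((k:ℚ_[p]))^2)⁻¹ + (p:ℚ_[p])*d))‖
          = ‖(-(Hq p (p-1)) * ((((k:ℚ_[p]))^2)⁻¹ + (p:ℚ_[p])*d))‖ := by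
        rw [norm_mul, neg_one_pow_norm, one_mul]
      rw [h1, norm_mul, norm_neg]
      have hbr : ‖(((k:ℚ_[p]))^2)⁻¹ + (p:ℚ_[p])*d‖ ≤ 1 := by
        refine padd (le_of_eq ?_) ((p_mul_le hd).trans ?_)
        · rw [norm_inv, norm_pow, nat_unit (by omega) (by omega)]; norm_num
        · rw [inv_le_one_iff₀]
          right; exact_mod_cast Nat.one_le_cast.mpr (by omega)
      calc ‖Hq p (p-1)‖ * ‖(((k:ℚ_[p]))^2)⁻¹ + (p:ℚ_[p])*d‖
          ≤ (p:ℝ)⁻¹ * 1 := mul_le_mul (H1_bound hm) hbr (norm_nonneg _) (by positivity)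
        _ = (p:ℝ)⁻¹ := mul_one _
    · refine p_mul_le ?_
      rw [norm_mul, neg_one_pow_norm, one_mul]
      have hinv2 : ‖(((k:ℚ_[p]))^2)⁻¹‖ ≤ 1 := by
        rw [norm_inv, norm_pow, nat_unit (by omega) (by omega)]; norm_num
      have hinv1 : ‖((k:ℚ_[p]))⁻¹‖ ≤ 1 := by
        rw [norm_inv, nat_unit (by omega) (by omega)]; norm_num
      have hHk : ‖Hq p k‖ ≤ 1 := Hq_le_one (by omega)
      have hp1 : (p:ℝ)⁻¹ ≤ 1 := by
        rw [inv_le_one_iff₀]; right; exact_mod_cast Nat.one_le_cast.mpr (by omega)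
      refine padd (padd (padd ?_ ?_) ?_) ?_
      · rw [norm_neg]; exact pmul1 hHk hd
      · exact pmul1 hinv1 hd
      · exact pmul1 hc hinv2
      · exact (p_mul_le (pmul1 hc hd)).trans hp1
  have hfin : S2 - S3/2 = (2*S2 - S3) * ((2:ℚ_[p]))⁻¹ := by
    have h20 : (2:ℚ_[p]) ≠ 0 := by norm_num
    field_simp
  rw [hfin]
  refine pmul1 hkey (le_of_eq ?_)
  rw [norm_inv]
  have : ‖(2:ℚ_[p])‖ = 1 := by
    have := nat_unit (p := p) (k := 2) (by omega) (by omega)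
    simpa using this
  rw [this]; norm_num

/-- binomial coefficient expansion: C(p-1,k) = (-1)^k (1 - p H_k) + p² e -/
lemma choose_expand (h5 : 5 ≤ p) :
    ∀ k, k ≤ p - 1 → ∃ e : ℚ_[p], ‖e‖ ≤ 1 ∧
      (((p-1).choose k : ℕ) : ℚ_[p]) = (-1)^k * (1 - (p:ℚ_[p]) * Hq p k) + (p:ℚ_[p])^2 * e := by
  intro k
  induction k with
  | zero =>
    intro _
    refine ⟨0, by norm_num, ?_⟩
    simp [Hq]
  | succ k ih =>
    intro hk1
    have hk' : k ≤ p - 1 := by omega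
    obtain ⟨e, he, heq⟩ := ih hk'
    have hk10 : (((k+1 : ℕ) : ℚ_[p])) ≠ 0 := cast_nat_ne (by omega)
    have hcast : (((k+1 : ℕ)) : ℚ_[p]) = (k : ℚ_[p]) + 1 := by push_cast; ring
    have hcc : (((p-1).choose (k+1) : ℕ) : ℚ_[p]) * ((k+1 : ℕ) : ℚ_[p])
        = (((p-1).choose k : ℕ) : ℚ_[p]) * ((p : ℚ_[p]) - ((k+1 : ℕ) : ℚ_[p])) := by
      have hnat := Nat.choose_succ_right_eq (p-1) k
      have h1 : ((((p-1).choose (k+1) * (k+1) : ℕ) : ℤ) : ℚ_[p])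
          = ((((p-1).choose k * ((p-1) - k) : ℕ) : ℤ) : ℚ_[p]) := by
        exact_mod_cast congrArg (fun n : ℕ => ((n : ℤ) : ℚ_[p])) hnat
      push_cast [Nat.cast_sub hk', Nat.cast_sub (show 1 ≤ p by omega)] at h1
      rw [hcast]
      linear_combination h1
    have hchoose : (((p-1).choose (k+1) : ℕ) : ℚ_[p])
        = (((p-1).choose k : ℕ) : ℚ_[p]) * ((p : ℚ_[p]) - ((k+1 : ℕ) : ℚ_[p]))
          * (((k+1 : ℕ) : ℚ_[p]))⁻¹ := by
      rw [eq_mul_inv_iff_mul_eq₀ hk10]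
      exact hcc
    refine ⟨(-1)^(k+1) * Hq p k * (((k+1 : ℕ) : ℚ_[p]))⁻¹
        - e * (1 - (p:ℚ_[p]) * (((k+1 : ℕ) : ℚ_[p]))⁻¹), ?_, ?_⟩
    · have hHk : ‖Hq p k‖ ≤ 1 := Hq_le_one (by omega)
      have hinv : ‖(((k+1 : ℕ) : ℚ_[p]))⁻¹‖ ≤ 1 := by
        rw [norm_inv, nat_unit (by omega) (by omega)]; norm_num
      have hp1 : (p:ℝ)⁻¹ ≤ 1 := by
        rw [inv_le_one_iff₀]; right; exact_mod_cast Nat.one_le_cast.mpr (by omega)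
      refine psub ?_ ?_
      · have : ‖(-1:ℚ_[p])^(k+1) * Hq p k * (((k+1 : ℕ) : ℚ_[p]))⁻¹‖
            = ‖Hq p k * (((k+1 : ℕ) : ℚ_[p]))⁻¹‖ := by
          rw [mul_assoc, norm_mul, neg_one_pow_norm, one_mul]
        rw [this]; exact pmul1 hHk hinv
      · refine pmul1 he (psub (le_of_eq norm_one) ((p_mul_le hinv).trans hp1))
    · rw [hchoose, heq, Hq_succ_top, hcast]
      have hk0' : ((k : ℚ_[p]) + 1) ≠ 0 := by rw [← hcast]; exact hk10
      field_simp
      ring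

/-- L1 : ‖X - (Σ₁ - p Σ₂)‖ ≤ p⁻² -/
lemma L1_bound (h5 : 5 ≤ p) :
    ‖(∑ k ∈ Icc 1 (p-1), (((p-1).choose k : ℕ) : ℚ_[p]) * (((k:ℚ_[p]))^2)⁻¹)
      - ((∑ k ∈ Icc 1 (p-1), (-1:ℚ_[p])^k * (((k:ℚ_[p]))^2)⁻¹)
         - (p:ℚ_[p]) * ∑ k ∈ Icc 1 (p-1), (-1:ℚ_[p])^k * Hq p k * (((k:ℚ_[p]))^2)⁻¹)‖
      ≤ ((p:ℝ)⁻¹)^2 := by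
  rw [mul_sum, ← sum_sub_distrib, ← sum_sub_distrib]
  refine psum (by positivity) ?_
  intro k hk
  simp only [mem_Icc] at hk
  obtain ⟨e, he, heq⟩ := choose_expand h5 k (by omega)
  have hterm : (((p-1).choose k : ℕ) : ℚ_[p]) * (((k:ℚ_[p]))^2)⁻¹
      - ((-1:ℚ_[p])^k * (((k:ℚ_[p]))^2)⁻¹
        - (p:ℚ_[p]) * ((-1:ℚ_[p])^k * Hq p k * (((k:ℚ_[p]))^2)⁻¹))
      = (p:ℚ_[p])^2 * (e * (((k:ℚ_[p]))^2)⁻¹) := by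
    rw [heq]; ring
  rw [hterm]
  refine p_pow_mul_le 2 (pmul1 he (le_of_eq ?_))
  rw [norm_inv, norm_pow, nat_unit (by omega) (by omega)]
  norm_num

end St17

namespace St17
open Finset PowerSeries
variable {p : ℕ} [hp : Fact p.Prime]

/-- p-integrality of Bernoulli numbers below p-1 -/
lemma bernoulli_int : ∀ n, n ≤ p - 2 → ‖((bernoulli n : ℚ) : ℚ_[p])‖ ≤ 1 := by
  intro n
  induction n using Nat.strong_induction_on with
  | _ n ih =>
    intro hn
    match n with
    | 0 => simp [bernoulli_zero]
    | Nat.succ k =>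
      have h2 : 2 ≤ p := hp.out.two_le
      have hrec := sum_bernoulli (k + 2)
      rw [if_neg (by omega)] at hrec
      rw [Finset.sum_range_succ] at hrec
      have hch : ((k+2).choose (k+1) : ℚ) = (k+2 : ℚ) := by
        rw [Nat.choose_succ_self_right]; push_cast; ring
      rw [hch] at hrec
      -- bernoulli (k+1) = -(∑_{i<k+1} C(k+2,i) B_i) / (k+2)
      have hkq : ((k+2 : ℚ)) ≠ 0 := by positivity
      have hb : bernoulli (k+1) =
          -(∑ i ∈ range (k+1), ((k+2).choose i : ℚ) * bernoulli i) / (k+2) := by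
        field_simp
        linear_combination hrec
      have hcast : ((bernoulli (k+1) : ℚ) : ℚ_[p]) =
          -(∑ i ∈ range (k+1), (((k+2).choose i : ℕ) : ℚ_[p]) * ((bernoulli i : ℚ) : ℚ_[p]))
            * (((k+2 : ℕ) : ℚ_[p]))⁻¹ := by
        rw [hb]
        push_cast
        rw [div_eq_mul_inv]
      rw [hcast, norm_mul, norm_neg]
      have h1 : ‖∑ i ∈ range (k+1), (((k+2).choose i : ℕ) : ℚ_[p]) * ((bernoulli i : ℚ) : ℚ_[p])‖ ≤ 1 := by
        refine psum zero_le_one ?_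
        intro i hi
        simp only [mem_range] at hi
        exact pmul1 (nat_le_one _) (ih i (by omega) (by omega))
      have h2' : ‖(((k+2 : ℕ) : ℚ_[p]))⁻¹‖ = 1 := inv_nat_unit (by omega) (by omega)
      rw [h2', mul_one]
      exact h1

/-- Fermat little theorem bound -/
lemma fermat_le {a : ℕ} (ha : ¬ p ∣ a) : ‖(1 - (a : ℚ_[p])^(p-1))‖ ≤ (p:ℝ)⁻¹ := by
  have hz : (p : ℤ) ∣ (1 - (a:ℤ)^(p-1)) := by
    have h0 : ((a : ZMod p)) ≠ 0 := by
      rw [Ne, ZMod.natCast_eq_zero_iff]; exact ha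
    have h1 : ((a : ZMod p))^(p-1) = 1 := ZMod.pow_card_sub_one_eq_one h0
    have : ((1 - (a:ℤ)^(p-1) : ℤ) : ZMod p) = 0 := by
      push_cast
      rw [h1]; ring
    exact_mod_cast (ZMod.intCast_zmod_eq_zero_iff_dvd _ p).mp this
  have := int_dvd_le (p := p) hz
  have hc : (((1 - (a:ℤ)^(p-1) : ℤ)) : ℚ_[p]) = 1 - (a : ℚ_[p])^(p-1) := by push_cast; ring
  rwa [hc] at this

/-- power series identity: (rescale 2 B)·(exp+1) = C 2 · B -/
lemma rescale_two_bps :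
    (rescale (2:ℚ) (bernoulliPowerSeries ℚ)) * (exp ℚ + 1)
      = (C 2) * bernoulliPowerSeries ℚ := by
  have hexp : exp ℚ - 1 ≠ 0 := by
    intro h
    have := congrArg (coeff 1) h
    simp [coeff_exp, Nat.factorial] at this
  apply mul_right_cancel₀ hexp
  have key : (rescale (2:ℚ) (bernoulliPowerSeries ℚ)) * (rescale (2:ℚ) (exp ℚ) - 1)
      = rescale (2:ℚ) X := by
    rw [← bernoulliPowerSeries_mul_exp_sub_one ℚ, map_mul, map_sub, map_one]
  have hee : exp ℚ * exp ℚ = rescale (2:ℚ) (exp ℚ) := by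
    have h := exp_mul_exp_eq_exp_add (1:ℚ) 1
    norm_num [rescale_one] at h
    exact h
  calc (rescale (2:ℚ) (bernoulliPowerSeries ℚ)) * (exp ℚ + 1) * (exp ℚ - 1)
      = (rescale (2:ℚ) (bernoulliPowerSeries ℚ)) * (exp ℚ * exp ℚ - 1) := by ring
    _ = (rescale (2:ℚ) (bernoulliPowerSeries ℚ)) * (rescale (2:ℚ) (exp ℚ) - 1) := by rw [hee]
    _ = rescale (2:ℚ) X := key
    _ = (C 2) * X := rescale_X 2
    _ = (C 2) * (bernoulliPowerSeries ℚ * (exp ℚ - 1)) := by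
        rw [bernoulliPowerSeries_mul_exp_sub_one]
    _ = (C 2) * bernoulliPowerSeries ℚ * (exp ℚ - 1) := by ring

/-- the finite identity ∑ C(n,i) B_i 2^i = (2 - 2^n) B_n -/
lemma bern_half (n : ℕ) :
    ∑ i ∈ range (n+1), ((n.choose i : ℚ)) * bernoulli i * 2^i = (2 - 2^n) * bernoulli n := by
  have h := congrArg (coeff n) rescale_two_bps
  rw [mul_add, mul_one, map_add] at h
  rw [coeff_mul, Nat.sum_antidiagonal_eq_sum_range_succ_mk, coeff_C_mul] at h
  simp only [coeff_rescale, bernoulliPowerSeries, coeff_mk, coeff_exp,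
    Algebra.algebraMap_self, RingHom.id_apply, one_div, Nat.succ_eq_add_one] at h
  have hfn : ((n.factorial : ℚ)) ≠ 0 := by exact_mod_cast n.factorial_ne_zero
  have hterm : ∀ i ∈ range (n+1), ((n.choose i : ℚ)) * bernoulli i * 2^i
      = (n.factorial : ℚ) * (2^i * (bernoulli i / (i.factorial : ℚ)) * (((n-i).factorial : ℚ))⁻¹) := by
    intro i hi
    simp only [mem_range] at hi
    have hfc : ((n.choose i : ℚ)) * (i.factorial : ℚ) * (((n-i).factorial : ℚ)) = (n.factorial : ℚ) := by
      exact_mod_cast congrArg (fun m : ℕ => (m : ℚ)) (Nat.choose_mul_factorial_mul_factorial (by omega))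
    have hne1 : ((i.factorial : ℚ)) ≠ 0 := by exact_mod_cast i.factorial_ne_zero
    have hne2 : (((n-i).factorial : ℚ)) ≠ 0 := by exact_mod_cast (n-i).factorial_ne_zero
    field_simp
    linear_combination (bernoulli i) * hfc
  calc ∑ i ∈ range (n+1), ((n.choose i : ℚ)) * bernoulli i * 2^i
      = ∑ i ∈ range (n+1), (n.factorial : ℚ) *
          (2^i * (bernoulli i / (i.factorial : ℚ)) * (((n-i).factorial : ℚ))⁻¹) :=
        sum_congr rfl hterm
    _ = (n.factorial : ℚ) * ∑ i ∈ range (n+1),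
          (2^i * (bernoulli i / (i.factorial : ℚ)) * (((n-i).factorial : ℚ))⁻¹) := (mul_sum _ _ _).symm
    _ = (n.factorial : ℚ) * (2 * (bernoulli n / (n.factorial : ℚ))
          - 2^n * (bernoulli n / (n.factorial : ℚ))) := by
        rw [show (∑ i ∈ range (n+1),
          (2^i * (bernoulli i / (i.factorial : ℚ)) * (((n-i).factorial : ℚ))⁻¹))
          = 2 * (bernoulli n / (n.factorial : ℚ)) - 2^n * (bernoulli n / (n.factorial : ℚ))
          from by linear_combination h]
    _ = (2 - 2^n) * bernoulli n := by field_simp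

end St17

namespace St17
open Finset
variable {p : ℕ} [hp : Fact p.Prime]

lemma inv_two_norm (h5 : 5 ≤ p) : ‖((2:ℚ_[p]))⁻¹‖ = 1 := by
  have := inv_nat_unit (p := p) (k := 2) (by omega) (by omega)
  simpa using this

lemma T3_pow (h5 : 5 ≤ p) {m : ℕ} (hm : p = 2*m+1) :
    ‖(∑ j ∈ Icc 1 m, (((j:ℚ_[p]))^3)⁻¹) - ∑ j ∈ Icc 1 m, ((j:ℚ_[p]))^(p-4)‖ ≤ (p:ℝ)⁻¹ := by
  rw [← sum_sub_distrib]
  refine psum (by positivity) ?_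
  intro j hj
  simp only [mem_Icc] at hj
  have hj0 : ((j:ℚ_[p])) ≠ 0 := cast_nat_ne (by omega)
  have hj3 : ((j:ℚ_[p]))^(p-4) = ((j:ℚ_[p]))^(p-1) * (((j:ℚ_[p]))^3)⁻¹ := by
    rw [eq_mul_inv_iff_mul_eq₀ (pow_ne_zero _ hj0), ← pow_add]
    congr 1; omega
  have hterm : (((j:ℚ_[p]))^3)⁻¹ - ((j:ℚ_[p]))^(p-4)
      = (1 - ((j:ℚ_[p]))^(p-1)) * (((j:ℚ_[p]))^3)⁻¹ := by
    rw [hj3]; ring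
  rw [hterm]
  refine pmul1 (fermat_le ?_) (le_of_eq ?_)
  · intro hdvd
    have := Nat.le_of_dvd (by omega) hdvd
    omega
  · rw [norm_inv, norm_pow, nat_unit (by omega) (by omega)]; norm_num

lemma faulhaber_q (h5 : 5 ≤ p) {m : ℕ} (hm : p = 2*m+1) :
    (∑ j ∈ Icc 1 m, ((j:ℚ_[p]))^(p-4))
      = ∑ i ∈ range (p-3), ((bernoulli i : ℚ) : ℚ_[p]) * (((p-3).choose i : ℕ) : ℚ_[p])
          * (((m+1 : ℕ)) : ℚ_[p])^(p-3-i) / (((p-3 : ℕ)) : ℚ_[p]) := by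
  have hQ := sum_range_pow (m+1) (p-4)
  rw [show (p-4)+1 = p-3 from by omega] at hQ
  have hden : ((p-4 : ℕ) : ℚ) + 1 = ((p-3 : ℕ) : ℚ) := by
    rw [Nat.cast_sub (by omega), Nat.cast_sub (by omega)]; ring
  rw [hden] at hQ
  have hins : (range (m+1)) = insert 0 (Icc 1 m) := by
    ext x; simp only [mem_range, mem_insert, mem_Icc]; omega
  rw [hins, sum_insert (by simp), Nat.cast_zero, zero_pow (by omega : p - 4 ≠ 0), zero_add] at hQ
  have := congrArg (fun q : ℚ => (q : ℚ_[p])) hQ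
  push_cast at this ⊢
  convert this using 1
  
lemma half_cmp (h5 : 5 ≤ p) {m : ℕ} (hm : p = 2*m+1) :
    ‖(∑ i ∈ range (p-3), ((bernoulli i : ℚ) : ℚ_[p]) * (((p-3).choose i : ℕ) : ℚ_[p])
          * (((m+1 : ℕ)) : ℚ_[p])^(p-3-i) / (((p-3 : ℕ)) : ℚ_[p]))
      - (∑ i ∈ range (p-3), ((bernoulli i : ℚ) : ℚ_[p]) * (((p-3).choose i : ℕ) : ℚ_[p])
          * ((2:ℚ_[p]))⁻¹^(p-3-i) / (((p-3 : ℕ)) : ℚ_[p]))‖ ≤ (p:ℝ)⁻¹ := by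
  rw [← sum_sub_distrib]
  refine psum (by positivity) ?_
  intro i hi
  simp only [mem_range] at hi
  set M : ℚ_[p] := (((m+1 : ℕ)) : ℚ_[p]) with hM
  set y : ℚ_[p] := ((2:ℚ_[p]))⁻¹ with hy
  set a : ℕ := p - 3 - i with ha
  have hterm : ((bernoulli i : ℚ) : ℚ_[p]) * (((p-3).choose i : ℕ) : ℚ_[p]) * M^a / (((p-3 : ℕ)) : ℚ_[p])
      - ((bernoulli i : ℚ) : ℚ_[p]) * (((p-3).choose i : ℕ) : ℚ_[p]) * y^a / (((p-3 : ℕ)) : ℚ_[p])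
      = ((bernoulli i : ℚ) : ℚ_[p]) * (((p-3).choose i : ℕ) : ℚ_[p]) * (M^a - y^a)
          * ((((p-3 : ℕ)) : ℚ_[p]))⁻¹ := by
    rw [div_sub_div_same, ← mul_sub, div_eq_mul_inv]
  have hMy : M - y = (p : ℚ_[p]) * ((2:ℚ_[p]))⁻¹ := by
    have h2 : (2:ℚ_[p]) ≠ 0 := by norm_num
    rw [hM, hy]
    field_simp
    push_cast
    have : (p : ℚ_[p]) = 2*(m:ℚ_[p]) + 1 := by exact_mod_cast congrArg (fun n : ℕ => (n:ℚ_[p])) hm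
    linear_combination -this
  have hgeom := geom_sum₂_mul M y a
  have hpow : ‖M^a - y^a‖ ≤ (p:ℝ)⁻¹ := by
    rw [← hgeom, hMy]
    have hg : ‖∑ t ∈ range a, M^t * y^(a-1-t)‖ ≤ 1 := by
      refine psum zero_le_one ?_
      intro t ht
      refine pmul1 (le_of_eq ?_) (le_of_eq ?_)
      · rw [norm_pow, hM]
        rw [nat_unit (by omega) (by omega)]
        norm_num
      · rw [norm_pow, hy, inv_two_norm h5, one_pow]
    rw [norm_mul]
    calc ‖∑ t ∈ range a, M^t * y^(a-1-t)‖ * ‖(p : ℚ_[p]) * ((2:ℚ_[p]))⁻¹‖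
        ≤ 1 * ((p:ℝ)⁻¹) := by
          refine mul_le_mul hg ?_ (norm_nonneg _) zero_le_one
          exact p_mul_le (le_of_eq (inv_two_norm h5))
      _ = (p:ℝ)⁻¹ := one_mul _
  rw [hterm]
  have hb : ‖((bernoulli i : ℚ) : ℚ_[p])‖ ≤ 1 := bernoulli_int i (by omega)
  have hc : ‖(((p-3).choose i : ℕ) : ℚ_[p])‖ ≤ 1 := nat_le_one _
  have hD : ‖((((p-3 : ℕ)) : ℚ_[p]))⁻¹‖ = 1 := inv_nat_unit (by omega) (by omega)
  have hbc : ‖((bernoulli i : ℚ) : ℚ_[p]) * (((p-3).choose i : ℕ) : ℚ_[p])‖ ≤ 1 := pmul1 hb hc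
  rw [norm_mul, hD, mul_one, norm_mul]
  calc ‖((bernoulli i : ℚ) : ℚ_[p]) * (((p-3).choose i : ℕ) : ℚ_[p])‖ * ‖M^a - y^a‖
      ≤ 1 * ((p:ℝ)⁻¹) := mul_le_mul hbc hpow (norm_nonneg _) zero_le_one
    _ = (p:ℝ)⁻¹ := one_mul _

end St17

namespace St17
open Finset
variable {p : ℕ} [hp : Fact p.Prime]

/-- evaluation of the half sum via bern_half -/
lemma V_cast (h5 : 5 ≤ p) :
    (∑ i ∈ range (p-3), ((bernoulli i : ℚ) : ℚ_[p]) * (((p-3).choose i : ℕ) : ℚ_[p])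
          * ((2:ℚ_[p]))⁻¹^(p-3-i) / (((p-3 : ℕ)) : ℚ_[p]))
      = ((bernoulli (p-3) : ℚ) : ℚ_[p]) * (2 - 2^(p-2) : ℚ_[p])
          / (2^(p-3) * (((p-3 : ℕ)) : ℚ_[p])) := by
  -- work in ℚ first
  have hQ : (∑ i ∈ range (p-3), (bernoulli i : ℚ) * (((p-3).choose i : ℕ) : ℚ)
          * ((2:ℚ))⁻¹^(p-3-i) / (((p-3 : ℕ)) : ℚ))
      = (bernoulli (p-3) : ℚ) * (2 - 2^(p-2) : ℚ) / (2^(p-3) * (((p-3 : ℕ)) : ℚ)) := by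
    have hb := bern_half (p-3)
    rw [sum_range_succ, Nat.choose_self, Nat.cast_one, one_mul] at hb
    have h2p2 : (2:ℚ) * 2^(p-3) = 2^(p-2) := by
      rw [← pow_succ']; congr 1; omega
    have hsum : (∑ i ∈ range (p-3), (((p-3).choose i : ℚ)) * bernoulli i * 2^i)
        = (2 - 2^(p-2)) * bernoulli (p-3) := by
      have : (2 - (2:ℚ)^(p-3)) * bernoulli (p-3) - bernoulli (p-3) * 2^(p-3)
          = (2 - 2^(p-2)) * bernoulli (p-3) := by
        linear_combination (-(bernoulli (p-3))) * h2p2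
      rw [← this]
      linear_combination hb
    have hper : ∀ i ∈ range (p-3), (bernoulli i : ℚ) * (((p-3).choose i : ℕ) : ℚ)
          * ((2:ℚ))⁻¹^(p-3-i) / (((p-3 : ℕ)) : ℚ)
        = ((((p-3).choose i : ℚ)) * bernoulli i * 2^i) * ((2:ℚ)^(p-3) * (((p-3 : ℕ)) : ℚ))⁻¹ := by
      intro i hi
      simp only [mem_range] at hi
      have hsplit2 : (2:ℚ)^(p-3-i) * 2^i = 2^(p-3) := by
        rw [← pow_add]; congr 1; omega
      have hD0 : (((p-3 : ℕ)) : ℚ) ≠ 0 := by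
        have : (0:ℕ) < p - 3 := by omega
        exact_mod_cast Nat.cast_pos.mpr this |>.ne'
      rw [inv_pow, ← hsplit2]
      field_simp
    rw [sum_congr rfl hper, ← sum_mul, hsum]
    ring
  have := congrArg (fun q : ℚ => (q : ℚ_[p])) hQ
  push_cast at this
  convert this using 2
  
/-- ‖V + 2B‖ ≤ 1/p -/
lemma Vp2B (h5 : 5 ≤ p) :
    ‖((bernoulli (p-3) : ℚ) : ℚ_[p]) * (2 - 2^(p-2) : ℚ_[p])
          / (2^(p-3) * (((p-3 : ℕ)) : ℚ_[p]))
      + 2 * ((bernoulli (p-3) : ℚ) : ℚ_[p])‖ ≤ (p:ℝ)⁻¹ := by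
  set B : ℚ_[p] := ((bernoulli (p-3) : ℚ) : ℚ_[p]) with hB
  set D : ℚ_[p] := (((p-3 : ℕ)) : ℚ_[p]) with hD
  have hD0 : D ≠ 0 := cast_psub_ne (by omega) (by omega)
  have h20 : (2:ℚ_[p]) ≠ 0 := by norm_num
  have hE0 : (2:ℚ_[p])^(p-3) ≠ 0 := pow_ne_zero _ h20
  have hDp : D = (p : ℚ_[p]) - 3 := by
    rw [hD, cast_psub (by omega)]; norm_num
  have h2p2 : (2:ℚ_[p]) * 2^(p-3) = 2^(p-2) := by
    rw [← pow_succ']; congr 1; omega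
  have hN : ((2 + ((p:ℤ) - 4) * 2^(p-2) : ℤ) : ℚ_[p])
      = (2 - 2^(p-2)) + 2 * (2^(p-3) * D) := by
    push_cast
    rw [hDp]
    linear_combination (3 - (p:ℚ_[p])) * h2p2
  have heq : B * (2 - 2^(p-2) : ℚ_[p]) / (2^(p-3) * D) + 2 * B
      = ((2 + ((p:ℤ) - 4) * 2^(p-2) : ℤ) : ℚ_[p]) * (B * ((2^(p-3) * D))⁻¹) := by
    rw [hN]
    field_simp
  rw [heq]
  have hdvd : (p:ℤ) ∣ (2 + ((p:ℤ) - 4) * 2^(p-2)) := by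
    have h2Z : ((2:ℕ) : ZMod p) ≠ 0 := by
      rw [Ne, ZMod.natCast_eq_zero_iff]
      intro hdvd; have := Nat.le_of_dvd (by omega) hdvd; omega
    have h2Z' : ((2:ZMod p)) ≠ 0 := by
      have : ((2:ℕ) : ZMod p) = (2 : ZMod p) := by push_cast; ring
      rwa [this] at h2Z
    have hferm : (2:ZMod p)^(p-1) = 1 := ZMod.pow_card_sub_one_eq_one h2Z'
    have hcast0 : ((2 + ((p:ℤ) - 4) * 2^(p-2) : ℤ) : ZMod p) = 0 := by
      push_cast
      rw [ZMod.natCast_self]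
      have h4 : (4:ZMod p) * 2^(p-2) = 2^(p-1) * 2 := by
        rw [show (4:ZMod p) = 2^2 from by norm_num, ← pow_add, ← pow_succ]
        congr 1; omega
      have : ((0:ZMod p) - 4) * 2^(p-2) = -(2^(p-1) * 2) := by
        rw [← h4]; ring
      rw [this, hferm]
      ring
    exact_mod_cast (ZMod.intCast_zmod_eq_zero_iff_dvd _ p).mp hcast0
  refine (pmul1 (int_dvd_le hdvd) ?_)
  refine pmul1 (bernoulli_int _ (by omega)) (le_of_eq ?_)
  rw [norm_inv, norm_mul, norm_pow]
  have h2n : ‖(2:ℚ_[p])‖ = 1 := by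
    have := nat_unit (p := p) (k := 2) (by omega) (by omega)
    simpa using this
  rw [h2n, one_pow, one_mul, hD, nat_unit (by omega) (by omega)]
  norm_num

/-- L6 : ‖T3 + 2B‖ ≤ 1/p -/
lemma L6_bound (h5 : 5 ≤ p) {m : ℕ} (hm : p = 2*m+1) :
    ‖(∑ j ∈ Icc 1 m, (((j:ℚ_[p]))^3)⁻¹) + 2 * ((bernoulli (p-3) : ℚ) : ℚ_[p])‖ ≤ (p:ℝ)⁻¹ := by
  have key : (∑ j ∈ Icc 1 m, (((j:ℚ_[p]))^3)⁻¹) + 2 * ((bernoulli (p-3) : ℚ) : ℚ_[p])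
      = ((∑ j ∈ Icc 1 m, (((j:ℚ_[p]))^3)⁻¹) - ∑ j ∈ Icc 1 m, ((j:ℚ_[p]))^(p-4))
        + (((∑ j ∈ Icc 1 m, ((j:ℚ_[p]))^(p-4))
            - (∑ i ∈ range (p-3), ((bernoulli i : ℚ) : ℚ_[p]) * (((p-3).choose i : ℕ) : ℚ_[p])
                * ((2:ℚ_[p]))⁻¹^(p-3-i) / (((p-3 : ℕ)) : ℚ_[p])))
          + ((∑ i ∈ range (p-3), ((bernoulli i : ℚ) : ℚ_[p]) * (((p-3).choose i : ℕ) : ℚ_[p])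
                * ((2:ℚ_[p]))⁻¹^(p-3-i) / (((p-3 : ℕ)) : ℚ_[p]))
            + 2 * ((bernoulli (p-3) : ℚ) : ℚ_[p]))) := by ring
  rw [key]
  refine padd (T3_pow h5 hm) (padd ?_ ?_)
  · rw [faulhaber_q h5 hm]
    exact half_cmp h5 hm
  · rw [V_cast h5]
    exact Vp2B h5

end St17

namespace St17
open Finset
variable {p : ℕ} [hp : Fact p.Prime]

lemma main_norm_bound (h5 : 5 ≤ p) {m : ℕ} (hm : p = 2*m+1) :
    ‖(∑ k ∈ Icc 1 (p-1), (((p-1).choose k : ℕ) : ℚ_[p]) * (((k:ℚ_[p]))^2)⁻¹)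
      - (3*(p:ℚ_[p])/4) * ((bernoulli (p-3) : ℚ) : ℚ_[p])‖ ≤ ((p:ℝ)⁻¹)^2 := by
  set X : ℚ_[p] := ∑ k ∈ Icc 1 (p-1), (((p-1).choose k : ℕ) : ℚ_[p]) * (((k:ℚ_[p]))^2)⁻¹ with hX
  set S1 : ℚ_[p] := ∑ k ∈ Icc 1 (p-1), (-1:ℚ_[p])^k * (((k:ℚ_[p]))^2)⁻¹ with hS1
  set S2 : ℚ_[p] := ∑ k ∈ Icc 1 (p-1), (-1:ℚ_[p])^k * Hq p k * (((k:ℚ_[p]))^2)⁻¹ with hS2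
  set S3 : ℚ_[p] := ∑ k ∈ Icc 1 (p-1), (-1:ℚ_[p])^k * (((k:ℚ_[p]))^3)⁻¹ with hS3
  set T3 : ℚ_[p] := ∑ j ∈ Icc 1 m, (((j:ℚ_[p]))^3)⁻¹ with hT3
  set H3 : ℚ_[p] := ∑ k ∈ Icc 1 (p-1), (((k:ℚ_[p]))^3)⁻¹ with hH3
  set B : ℚ_[p] := ((bernoulli (p-3) : ℚ) : ℚ_[p]) with hB
  have hL4 : S3 = T3/4 - H3 := L4_eq hm
  have hkey : X - (3*(p:ℚ_[p])/4) * B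
      = (X - (S1 - (p:ℚ_[p])*S2))
        + (S1 + (p:ℚ_[p])/4 * T3)
        + (-(p:ℚ_[p]) * (S2 - S3/2))
        + (-(3*(p:ℚ_[p])/8) * (T3 + 2*B))
        + ((p:ℚ_[p])/2 * H3) := by
    rw [hL4]; ring
  rw [hkey]
  have hpinv1 : (p:ℝ)⁻¹ ≤ 1 := by
    rw [inv_le_one_iff₀]; right; exact_mod_cast Nat.one_le_cast.mpr (by omega)
  have b1 : ‖X - (S1 - (p:ℚ_[p])*S2)‖ ≤ ((p:ℝ)⁻¹)^2 := L1_bound h5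
  have b2 : ‖S1 + (p:ℚ_[p])/4 * T3‖ ≤ ((p:ℝ)⁻¹)^2 := L3_bound hm
  have b3 : ‖-(p:ℚ_[p]) * (S2 - S3/2)‖ ≤ ((p:ℝ)⁻¹)^2 := by
    rw [neg_mul, norm_neg, norm_mul, Padic.norm_p, sq]
    exact mul_le_mul le_rfl (L2_bound h5 hm) (norm_nonneg _) (by positivity)
  have b4 : ‖-(3*(p:ℚ_[p])/8) * (T3 + 2*B)‖ ≤ ((p:ℝ)⁻¹)^2 := by
    have hr : -(3*(p:ℚ_[p])/8) * (T3 + 2*B) = (p:ℚ_[p]) * ((-(3:ℚ_[p])/8) * (T3 + 2*B)) := by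
      ring
    rw [hr, norm_mul, Padic.norm_p, sq]
    refine mul_le_mul le_rfl ?_ (norm_nonneg _) (by positivity)
    rw [norm_mul]
    have hc : ‖(-(3:ℚ_[p])/8)‖ = 1 := by
      rw [norm_div, norm_neg]
      have h3 : ‖(3:ℚ_[p])‖ = 1 := by
        have := nat_unit (p := p) (k := 3) (by omega) (by omega)
        simpa using this
      have h8 : ‖(8:ℚ_[p])‖ = 1 := by
        have h2 : ‖(2:ℚ_[p])‖ = 1 := by
          have := nat_unit (p := p) (k := 2) (by omega) (by omega)
          simpa using this
        rw [show (8:ℚ_[p]) = 2^3 from by norm_num, norm_pow, h2, one_pow]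
      rw [h3, h8]; norm_num
    rw [hc, one_mul]
    exact L6_bound h5 hm
  have b5 : ‖(p:ℚ_[p])/2 * H3‖ ≤ ((p:ℝ)⁻¹)^2 := by
    have hr : (p:ℚ_[p])/2 * H3 = (p:ℚ_[p]) * ((2:ℚ_[p])⁻¹ * H3) := by ring
    rw [hr, norm_mul, Padic.norm_p, sq]
    refine mul_le_mul le_rfl ?_ (norm_nonneg _) (by positivity)
    rw [norm_mul, inv_two_norm h5, one_mul]
    exact H3_bound hm
  exact padd (padd (padd (padd b1 b2) b3) b4) b5

end St17

theorem stmt17 (p : ℕ) (hp : p.Prime) (hp3 : 3 < p) :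
    (∑ k ∈ Finset.Icc 1 (p - 1), (1 : ℚ) / (k : ℚ) ^ 2 * ((p - 1).choose k)) - ((3 * (p : ℚ) / 4) * bernoulli (p - 3)) = 0 ∨ (2 : ℤ) ≤ padicValRat p ((∑ k ∈ Finset.Icc 1 (p - 1), (1 : ℚ) / (k : ℚ) ^ 2 * ((p - 1).choose k)) - ((3 * (p : ℚ) / 4) * bernoulli (p - 3))) := by
  haveI hfact : Fact p.Prime := ⟨hp⟩
  have h4 : p ≠ 4 := by intro h; rw [h] at hp; norm_num at hp
  have h5 : 5 ≤ p := by have := hp.two_le; omega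
  obtain ⟨m, hm⟩ : ∃ m, p = 2*m+1 := by
    obtain ⟨m, hm⟩ := hp.odd_of_ne_two (by omega)
    exact ⟨m, by omega⟩
  set dQ : ℚ := (∑ k ∈ Finset.Icc 1 (p - 1), (1 : ℚ) / (k : ℚ) ^ 2 * ((p - 1).choose k))
      - ((3 * (p : ℚ) / 4) * bernoulli (p - 3)) with hdQ
  rcases eq_or_ne dQ 0 with h0 | h0
  · left; exact h0
  · right
    have hcast : ((dQ : ℚ) : ℚ_[p])
        = (∑ k ∈ Finset.Icc 1 (p-1), (((p-1).choose k : ℕ) : ℚ_[p]) * (((k:ℚ_[p]))^2)⁻¹)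
          - (3*(p:ℚ_[p])/4) * ((bernoulli (p-3) : ℚ) : ℚ_[p]) := by
      rw [hdQ]
      push_cast
      congr 1
      refine Finset.sum_congr rfl fun k _ => ?_
      rw [one_div]
      ring
    have hnorm : ‖((dQ : ℚ) : ℚ_[p])‖ ≤ ((p:ℝ)⁻¹)^2 := by
      rw [hcast]
      exact St17.main_norm_bound h5 hm
    have hne : ((dQ : ℚ) : ℚ_[p]) ≠ 0 := by
      exact_mod_cast (Rat.cast_ne_zero (α := ℚ_[p])).mpr h0
    rw [Padic.norm_eq_zpow_neg_valuation hne, Padic.valuation_ratCast] at hnorm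
    have hε : ((p:ℝ)⁻¹)^2 = (p:ℝ)^(-2 : ℤ) := by
      rw [zpow_neg, inv_pow]
      norm_cast
    rw [hε] at hnorm
    have hp1 : (1:ℝ) < (p:ℝ) := by exact_mod_cast hp.one_lt
    have := (zpow_le_zpow_iff_right₀ hp1).mp hnorm
    omega
end
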